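/- arXiv:2112.01222 — 7 statements merged into one kernel-verified Lean document; each statement's English description precedes it below -/
import Mathlib

section
/- Let T : Fin n → Fin n → Fin n → ℝ with n ≥ 2, with partial traces T¹, T², T³ as above, and let F be the trace-free modification F i j k = T i j k - ((n+1)/((n-1)(n+2)))(T¹ᵢ δⱼₖ + T²ⱼ δᵢₖ + T³ₖ δᵢⱼ) + (1/((n-1)(n+2)))(T¹ⱼ δᵢₖ + T¹ₖ δᵢⱼ + T²ᵢ δⱼₖ + T²ₖ δᵢⱼ + T³ᵢ δⱼₖ + T³ⱼ δᵢₖ). Then ∑_{i,j,k} (F i j k)² = ∑_{i,j,k} (T i j k)² - ((n+1)/((n-1)(n+2)))(‖T¹‖² + ‖T²‖² + ‖T³‖²) + (2/((n-1)(n+2)))(⟨T¹,T²⟩ + ⟨T¹,T³⟩ + ⟨T²,T³⟩), where ‖·‖ and ⟨·,·⟩ are the Euclidean norm and inner product on Fin n → ℝ. -/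
theorem stmt1 (n : ℕ) (hn : 2 ≤ n) (T : Fin n → Fin n → Fin n → ℝ)
    (T1 T2 T3 : Fin n → ℝ)
    (hT1 : ∀ i, T1 i = ∑ l, T i l l)
    (hT2 : ∀ i, T2 i = ∑ l, T l i l)
    (hT3 : ∀ i, T3 i = ∑ l, T l l i)
    (F : Fin n → Fin n → Fin n → ℝ)
    (hF : ∀ i j k, F i j k = T i j k
      - (((n : ℝ) + 1) / (((n : ℝ) - 1) * ((n : ℝ) + 2))) *
          (T1 i * (if j = k then (1:ℝ) else 0)
           + T2 j * (if i = k then (1:ℝ) else 0)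
           + T3 k * (if i = j then (1:ℝ) else 0))
      + (1 / (((n : ℝ) - 1) * ((n : ℝ) + 2))) *
          (T1 j * (if i = k then (1:ℝ) else 0)
           + T1 k * (if i = j then (1:ℝ) else 0)
           + T2 i * (if j = k then (1:ℝ) else 0)
           + T2 k * (if i = j then (1:ℝ) else 0)
           + T3 i * (if j = k then (1:ℝ) else 0)
           + T3 j * (if i = k then (1:ℝ) else 0))) :
    ∑ i, ∑ j, ∑ k, (F i j k) ^ 2
      = ∑ i, ∑ j, ∑ k, (T i j k) ^ 2
        - (((n : ℝ) + 1) / (((n : ℝ) - 1) * ((n : ℝ) + 2))) *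
            ((∑ i, (T1 i) ^ 2) + (∑ i, (T2 i) ^ 2) + (∑ i, (T3 i) ^ 2))
        + (2 / (((n : ℝ) - 1) * ((n : ℝ) + 2))) *
            ((∑ i, T1 i * T2 i) + (∑ i, T1 i * T3 i) + (∑ i, T2 i * T3 i)) := by
  have hn1 : (1:ℝ) ≤ (n:ℝ) - 1 := by
    have : (2:ℝ) ≤ (n:ℝ) := by exact_mod_cast hn
    linarith
  have hD1 : ((n:ℝ) - 1) ≠ 0 := by linarith
  have hD2 : ((n:ℝ) + 2) ≠ 0 := by positivity
  set a : ℝ := ((n : ℝ) + 1) / (((n : ℝ) - 1) * ((n : ℝ) + 2)) with ha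
  set b : ℝ := 1 / (((n : ℝ) - 1) * ((n : ℝ) + 2)) with hb
  set P : Fin n → ℝ := fun i => -a * T1 i + b * (T2 i + T3 i) with hP
  set Q : Fin n → ℝ := fun i => -a * T2 i + b * (T1 i + T3 i) with hQ
  set R : Fin n → ℝ := fun i => -a * T3 i + b * (T1 i + T2 i) with hR
  have hF' : ∀ i j k, F i j k = T i j k
      + (if j = k then (1:ℝ) else 0) * P i
      + (if i = k then (1:ℝ) else 0) * Q j
      + (if i = j then (1:ℝ) else 0) * R k := by
    intro i j k
    rw [hF]
    simp only [hP, hQ, hR]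
    ring
  have hsq : ∀ i j k, (F i j k) ^ 2 =
      T i j k ^ 2
      + 2 * (T i j k * ((if j = k then (1:ℝ) else 0) * P i))
      + 2 * (T i j k * ((if i = k then (1:ℝ) else 0) * Q j))
      + 2 * (T i j k * ((if i = j then (1:ℝ) else 0) * R k))
      + (if j = k then (1:ℝ) else 0) * P i ^ 2
      + (if i = k then (1:ℝ) else 0) * Q j ^ 2
      + (if i = j then (1:ℝ) else 0) * R k ^ 2
      + 2 * ((if j = k then (1:ℝ) else 0) * ((if i = k then (1:ℝ) else 0) * (P i * Q j)))
      + 2 * ((if j = k then (1:ℝ) else 0) * ((if i = j then (1:ℝ) else 0) * (P i * R k)))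
      + 2 * ((if i = k then (1:ℝ) else 0) * ((if i = j then (1:ℝ) else 0) * (Q j * R k))) := by
    intro i j k
    rw [hF']
    split_ifs <;> ring
  have e2 : ∑ i, ∑ j, ∑ k, 2 * (T i j k * ((if j = k then (1:ℝ) else 0) * P i))
      = 2 * ∑ i, T1 i * P i := by
    rw [Finset.mul_sum]
    refine Finset.sum_congr rfl fun i _ => ?_
    simp only [mul_ite, ite_mul, one_mul, zero_mul, mul_one, mul_zero,
      Finset.sum_ite_eq, Finset.mem_univ, if_true]
    rw [hT1, Finset.sum_mul, Finset.mul_sum]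
  have e3 : ∑ i, ∑ j, ∑ k, 2 * (T i j k * ((if i = k then (1:ℝ) else 0) * Q j))
      = 2 * ∑ i, T2 i * Q i := by
    rw [Finset.mul_sum, Finset.sum_comm]
    refine Finset.sum_congr rfl fun j _ => ?_
    simp only [mul_ite, ite_mul, one_mul, zero_mul, mul_one, mul_zero,
      Finset.sum_ite_eq, Finset.mem_univ, if_true]
    rw [hT2, Finset.sum_mul, Finset.mul_sum]
  have e4 : ∑ i, ∑ j, ∑ k, 2 * (T i j k * ((if i = j then (1:ℝ) else 0) * R k))
      = 2 * ∑ i, T3 i * R i := by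
    have h1 : ∀ i : Fin n, (∑ j, ∑ k, 2 * (T i j k * ((if i = j then (1:ℝ) else 0) * R k)))
        = ∑ k, 2 * (T i i k * R k) := by
      intro i
      have h0 : ∀ j : Fin n, (∑ k, 2 * (T i j k * ((if i = j then (1:ℝ) else 0) * R k)))
          = if i = j then (∑ k, 2 * (T i j k * R k)) else 0 := by
        intro j; split_ifs with h <;> simp [h]
      simp only [h0, Finset.sum_ite_eq, Finset.mem_univ, if_true]
    simp only [h1]
    rw [Finset.sum_comm, Finset.mul_sum]
    refine Finset.sum_congr rfl fun k _ => ?_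
    rw [hT3, Finset.sum_mul, Finset.mul_sum]
  have e5 : ∑ i : Fin n, ∑ j : Fin n, ∑ k : Fin n, (if j = k then (1:ℝ) else 0) * P i ^ 2
      = (n : ℝ) * ∑ i, P i ^ 2 := by
    simp only [ite_mul, one_mul, zero_mul, Finset.sum_ite_eq, Finset.mem_univ,
      if_true, Finset.sum_const, Finset.card_fin, nsmul_eq_mul]
    rw [Finset.mul_sum]
  have e6 : ∑ i : Fin n, ∑ j : Fin n, ∑ k : Fin n, (if i = k then (1:ℝ) else 0) * Q j ^ 2
      = (n : ℝ) * ∑ i, Q i ^ 2 := by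
    simp only [ite_mul, one_mul, zero_mul, Finset.sum_ite_eq, Finset.mem_univ, if_true]
    rw [Finset.sum_comm, Finset.mul_sum]
    refine Finset.sum_congr rfl fun j _ => ?_
    simp [Finset.sum_const, Finset.card_fin, mul_comm]
  have e7 : ∑ i : Fin n, ∑ j : Fin n, ∑ k : Fin n, (if i = j then (1:ℝ) else 0) * R k ^ 2
      = (n : ℝ) * ∑ i, R i ^ 2 := by
    have h1 : ∀ i : Fin n, (∑ j, ∑ k, (if i = j then (1:ℝ) else 0) * R k ^ 2)
        = ∑ k, R k ^ 2 := by
      intro i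
      have h0 : ∀ j : Fin n, (∑ k, (if i = j then (1:ℝ) else 0) * R k ^ 2)
          = if i = j then (∑ k, R k ^ 2) else 0 := by
        intro j; split_ifs with h <;> simp [h]
      simp only [h0, Finset.sum_ite_eq, Finset.mem_univ, if_true]
    simp only [h1, Finset.sum_const, Finset.card_fin, nsmul_eq_mul]
  have e8 : ∑ i, ∑ j, ∑ k, 2 * ((if j = k then (1:ℝ) else 0) * ((if i = k then (1:ℝ) else 0) * (P i * Q j)))
      = 2 * ∑ i, P i * Q i := by
    rw [Finset.mul_sum]
    refine Finset.sum_congr rfl fun i _ => ?_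
    simp [Finset.sum_ite_eq, mul_ite, ite_mul]
  have e9 : ∑ i, ∑ j, ∑ k, 2 * ((if j = k then (1:ℝ) else 0) * ((if i = j then (1:ℝ) else 0) * (P i * R k)))
      = 2 * ∑ i, P i * R i := by
    rw [Finset.mul_sum]
    refine Finset.sum_congr rfl fun i _ => ?_
    simp [Finset.sum_ite_eq, mul_ite, ite_mul]
  have e10 : ∑ i, ∑ j, ∑ k, 2 * ((if i = k then (1:ℝ) else 0) * ((if i = j then (1:ℝ) else 0) * (Q j * R k)))
      = 2 * ∑ i, Q i * R i := by
    rw [Finset.mul_sum]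
    refine Finset.sum_congr rfl fun i _ => ?_
    simp [Finset.sum_ite_eq, mul_ite, ite_mul]
  have step1 : ∑ i, ∑ j, ∑ k, (F i j k) ^ 2 =
      (∑ i, ∑ j, ∑ k, T i j k ^ 2)
      + 2 * (∑ i, T1 i * P i)
      + 2 * (∑ i, T2 i * Q i)
      + 2 * (∑ i, T3 i * R i)
      + (n : ℝ) * (∑ i, P i ^ 2)
      + (n : ℝ) * (∑ i, Q i ^ 2)
      + (n : ℝ) * (∑ i, R i ^ 2)
      + 2 * (∑ i, P i * Q i)
      + 2 * (∑ i, P i * R i)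
      + 2 * (∑ i, Q i * R i) := by
    simp only [hsq, Finset.sum_add_distrib]
    rw [e2, e3, e4, e5, e6, e7, e8, e9, e10]
  rw [step1]
  have key : 2 * (∑ i, T1 i * P i)
      + 2 * (∑ i, T2 i * Q i)
      + 2 * (∑ i, T3 i * R i)
      + (n : ℝ) * (∑ i, P i ^ 2)
      + (n : ℝ) * (∑ i, Q i ^ 2)
      + (n : ℝ) * (∑ i, R i ^ 2)
      + 2 * (∑ i, P i * Q i)
      + 2 * (∑ i, P i * R i)
      + 2 * (∑ i, Q i * R i)
      = - a * ((∑ i, (T1 i) ^ 2) + (∑ i, (T2 i) ^ 2) + (∑ i, (T3 i) ^ 2))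
        + 2 * b * ((∑ i, T1 i * T2 i) + (∑ i, T1 i * T3 i) + (∑ i, T2 i * T3 i)) := by
    simp only [Finset.mul_sum, ← Finset.sum_add_distrib, ← Finset.sum_neg_distrib]
    refine Finset.sum_congr rfl fun i _ => ?_
    simp only [hP, hQ, hR, ha, hb]
    field_simp
    ring
  rw [ha] at key
  rw [hb] at key
  linear_combination key
end

section
/- Let T : Fin n → Fin n → Fin n → ℝ with n ≥ 2, with partial traces T¹, T², T³, and let F be the trace-free modification of Theorem 1.1. Then ∑_{i,j,k} (F i j k)² ≤ ∑_{i,j,k} (G i j k)² for every tensor G of the form G i j k = T i j k + x₁ T¹ᵢ δⱼₖ + x₂ T¹ⱼ δᵢₖ + x₃ T¹ₖ δᵢⱼ + y₁ T²ᵢ δⱼₖ + y₂ T²ⱼ δᵢₖ + y₃ T²ₖ δᵢⱼ + z₁ T³ᵢ δⱼₖ + z₂ T³ⱼ δᵢₖ + z₃ T³ₖ δᵢⱼ with arbitrary real coefficients x₁,…,z₃. -/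
theorem stmt2 (n : ℕ) (hn : 2 ≤ n) (T : Fin n → Fin n → Fin n → ℝ)
    (T1 T2 T3 : Fin n → ℝ)
    (hT1 : ∀ i, T1 i = ∑ l, T i l l)
    (hT2 : ∀ i, T2 i = ∑ l, T l i l)
    (hT3 : ∀ i, T3 i = ∑ l, T l l i)
    (F : Fin n → Fin n → Fin n → ℝ)
    (hF : ∀ i j k, F i j k = T i j k
      - (((n : ℝ) + 1) / (((n : ℝ) - 1) * ((n : ℝ) + 2))) *
          (T1 i * (if j = k then (1:ℝ) else 0)
           + T2 j * (if i = k then (1:ℝ) else 0)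
           + T3 k * (if i = j then (1:ℝ) else 0))
      + (1 / (((n : ℝ) - 1) * ((n : ℝ) + 2))) *
          (T1 j * (if i = k then (1:ℝ) else 0)
           + T1 k * (if i = j then (1:ℝ) else 0)
           + T2 i * (if j = k then (1:ℝ) else 0)
           + T2 k * (if i = j then (1:ℝ) else 0)
           + T3 i * (if j = k then (1:ℝ) else 0)
           + T3 j * (if i = k then (1:ℝ) else 0))) :
    ∀ x₁ x₂ x₃ y₁ y₂ y₃ z₁ z₂ z₃ : ℝ,
      ∑ i, ∑ j, ∑ k, (F i j k) ^ 2
        ≤ ∑ i, ∑ j, ∑ k,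
            (T i j k
              + x₁ * T1 i * (if j = k then (1:ℝ) else 0)
              + x₂ * T1 j * (if i = k then (1:ℝ) else 0)
              + x₃ * T1 k * (if i = j then (1:ℝ) else 0)
              + y₁ * T2 i * (if j = k then (1:ℝ) else 0)
              + y₂ * T2 j * (if i = k then (1:ℝ) else 0)
              + y₃ * T2 k * (if i = j then (1:ℝ) else 0)
              + z₁ * T3 i * (if j = k then (1:ℝ) else 0)
              + z₂ * T3 j * (if i = k then (1:ℝ) else 0)
              + z₃ * T3 k * (if i = j then (1:ℝ) else 0)) ^ 2 := by
  intro x₁ x₂ x₃ y₁ y₂ y₃ z₁ z₂ z₃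
  have hn' : (2:ℝ) ≤ (n:ℝ) := by exact_mod_cast hn
  have hd : ((n:ℝ)-1)*((n:ℝ)+2) ≠ 0 := by nlinarith
  -- trace-freeness of F
  have tr1 : ∀ i, ∑ l, F i l l = 0 := by
    intro i
    have : ∑ l, F i l l =
        T1 i - (((n:ℝ)+1)/(((n:ℝ)-1)*((n:ℝ)+2))) * ((n:ℝ)*T1 i + T2 i + T3 i)
          + (1/(((n:ℝ)-1)*((n:ℝ)+2))) * (2*T1 i + ((n:ℝ)*T2 i + T2 i) + ((n:ℝ)*T3 i + T3 i)) := by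
      simp only [hF]
      rw [Finset.sum_add_distrib, Finset.sum_sub_distrib, ← Finset.mul_sum, ← Finset.mul_sum,
        Finset.sum_add_distrib, Finset.sum_add_distrib, Finset.sum_add_distrib,
        Finset.sum_add_distrib, Finset.sum_add_distrib, Finset.sum_add_distrib,
        Finset.sum_add_distrib]
      simp [Finset.sum_ite_eq, Finset.sum_ite_eq', Finset.mul_sum, hT1, hT2, hT3, mul_comm]
      left; simp only [mul_two, Finset.sum_add_distrib]; ring
    rw [this]; field_simp [show (n:ℝ) - 1 ≠ 0 by linarith]; ring
  have tr2 : ∀ i, ∑ l, F l i l = 0 := by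
    intro i
    have : ∑ l, F l i l =
        T2 i - (((n:ℝ)+1)/(((n:ℝ)-1)*((n:ℝ)+2))) * (T1 i + (n:ℝ)*T2 i + T3 i)
          + (1/(((n:ℝ)-1)*((n:ℝ)+2))) * (((n:ℝ)*T1 i + T1 i) + 2*T2 i + (T3 i + (n:ℝ)*T3 i)) := by
      simp only [hF]
      rw [Finset.sum_add_distrib, Finset.sum_sub_distrib, ← Finset.mul_sum, ← Finset.mul_sum,
        Finset.sum_add_distrib, Finset.sum_add_distrib, Finset.sum_add_distrib,
        Finset.sum_add_distrib, Finset.sum_add_distrib, Finset.sum_add_distrib,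
        Finset.sum_add_distrib]
      simp [Finset.sum_ite_eq, Finset.sum_ite_eq', Finset.mul_sum, hT1, hT2, hT3, mul_comm]
      left; simp only [mul_two, Finset.sum_add_distrib]; ring
    rw [this]; field_simp [show (n:ℝ) - 1 ≠ 0 by linarith]; ring
  have tr3 : ∀ i, ∑ l, F l l i = 0 := by
    intro i
    have : ∑ l, F l l i =
        T3 i - (((n:ℝ)+1)/(((n:ℝ)-1)*((n:ℝ)+2))) * (T1 i + T2 i + (n:ℝ)*T3 i)
          + (1/(((n:ℝ)-1)*((n:ℝ)+2))) * ((T1 i + (n:ℝ)*T1 i) + (T2 i + (n:ℝ)*T2 i) + 2*T3 i) := by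
      simp only [hF]
      rw [Finset.sum_add_distrib, Finset.sum_sub_distrib, ← Finset.mul_sum, ← Finset.mul_sum,
        Finset.sum_add_distrib, Finset.sum_add_distrib, Finset.sum_add_distrib,
        Finset.sum_add_distrib, Finset.sum_add_distrib, Finset.sum_add_distrib,
        Finset.sum_add_distrib]
      simp [Finset.sum_ite_eq, Finset.sum_ite_eq', Finset.mul_sum, hT1, hT2, hT3, mul_comm]
      left; simp only [mul_two, Finset.sum_add_distrib]; ring
    rw [this]; field_simp [show (n:ℝ) - 1 ≠ 0 by linarith]; ring
  -- orthogonality of F to pure-trace tensors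
  have O1 : ∀ u : Fin n → ℝ,
      ∑ i, ∑ j, ∑ k, 2*(F i j k * (u i * (if j = k then (1:ℝ) else 0))) = 0 := by
    intro u
    have h1 : ∀ i j : Fin n, ∑ k, 2*(F i j k * (u i * (if j = k then (1:ℝ) else 0)))
        = 2*(F i j j * u i) := by
      intro i j; simp [mul_ite, Finset.sum_ite_eq]
    simp only [h1]
    have h2 : ∀ i : Fin n, ∑ j, 2*(F i j j * u i) = 0 := by
      intro i
      have : ∑ j, 2*(F i j j * u i) = 2*u i*∑ j, F i j j := by
        rw [Finset.mul_sum]; congr 1; ext j; ring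
      rw [this, tr1, mul_zero]
    simp [h2]
  have O2 : ∀ u : Fin n → ℝ,
      ∑ i, ∑ j, ∑ k, 2*(F i j k * (u j * (if i = k then (1:ℝ) else 0))) = 0 := by
    intro u
    have h1 : ∀ i j : Fin n, ∑ k, 2*(F i j k * (u j * (if i = k then (1:ℝ) else 0)))
        = 2*(F i j i * u j) := by
      intro i j; simp [mul_ite, Finset.sum_ite_eq]
    simp only [h1]
    rw [Finset.sum_comm]
    have h2 : ∀ j : Fin n, ∑ i, 2*(F i j i * u j) = 0 := by
      intro j
      have : ∑ i, 2*(F i j i * u j) = 2*u j*∑ i, F i j i := by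
        rw [Finset.mul_sum]; congr 1; ext i; ring
      rw [this, tr2, mul_zero]
    simp [h2]
  have O3 : ∀ u : Fin n → ℝ,
      ∑ i, ∑ j, ∑ k, 2*(F i j k * (u k * (if i = j then (1:ℝ) else 0))) = 0 := by
    intro u
    have h1 : ∀ i : Fin n, ∑ j, ∑ k, 2*(F i j k * (u k * (if i = j then (1:ℝ) else 0)))
        = ∑ k, 2*(F i i k * u k) := by
      intro i
      rw [Finset.sum_comm]
      refine Finset.sum_congr rfl ?_
      intro k _
      simp [mul_ite, Finset.sum_ite_eq]
    simp only [h1]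
    rw [Finset.sum_comm]
    have h2 : ∀ k : Fin n, ∑ i, 2*(F i i k * u k) = 0 := by
      intro k
      have : ∑ i, 2*(F i i k * u k) = 2*u k*∑ i, F i i k := by
        rw [Finset.mul_sum]; congr 1; ext i; ring
      rw [this, tr3, mul_zero]
    simp [h2]
  -- pointwise decomposition of the summand
  have key2 : ∀ i j k : Fin n,
      (T i j k
        + x₁ * T1 i * (if j = k then (1:ℝ) else 0)
        + x₂ * T1 j * (if i = k then (1:ℝ) else 0)
        + x₃ * T1 k * (if i = j then (1:ℝ) else 0)
        + y₁ * T2 i * (if j = k then (1:ℝ) else 0)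
        + y₂ * T2 j * (if i = k then (1:ℝ) else 0)
        + y₃ * T2 k * (if i = j then (1:ℝ) else 0)
        + z₁ * T3 i * (if j = k then (1:ℝ) else 0)
        + z₂ * T3 j * (if i = k then (1:ℝ) else 0)
        + z₃ * T3 k * (if i = j then (1:ℝ) else 0)) ^ 2
      = F i j k ^ 2
        + ((x₁ + ((n:ℝ)+1)/(((n:ℝ)-1)*((n:ℝ)+2))) * T1 i * (if j = k then (1:ℝ) else 0)
          + (x₂ - 1/(((n:ℝ)-1)*((n:ℝ)+2))) * T1 j * (if i = k then (1:ℝ) else 0)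
          + (x₃ - 1/(((n:ℝ)-1)*((n:ℝ)+2))) * T1 k * (if i = j then (1:ℝ) else 0)
          + (y₁ - 1/(((n:ℝ)-1)*((n:ℝ)+2))) * T2 i * (if j = k then (1:ℝ) else 0)
          + (y₂ + ((n:ℝ)+1)/(((n:ℝ)-1)*((n:ℝ)+2))) * T2 j * (if i = k then (1:ℝ) else 0)
          + (y₃ - 1/(((n:ℝ)-1)*((n:ℝ)+2))) * T2 k * (if i = j then (1:ℝ) else 0)
          + (z₁ - 1/(((n:ℝ)-1)*((n:ℝ)+2))) * T3 i * (if j = k then (1:ℝ) else 0)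
          + (z₂ - 1/(((n:ℝ)-1)*((n:ℝ)+2))) * T3 j * (if i = k then (1:ℝ) else 0)
          + (z₃ + ((n:ℝ)+1)/(((n:ℝ)-1)*((n:ℝ)+2))) * T3 k * (if i = j then (1:ℝ) else 0)) ^ 2
        + (2*(F i j k * ((x₁ + ((n:ℝ)+1)/(((n:ℝ)-1)*((n:ℝ)+2))) * T1 i * (if j = k then (1:ℝ) else 0)))
          + 2*(F i j k * ((x₂ - 1/(((n:ℝ)-1)*((n:ℝ)+2))) * T1 j * (if i = k then (1:ℝ) else 0)))
          + 2*(F i j k * ((x₃ - 1/(((n:ℝ)-1)*((n:ℝ)+2))) * T1 k * (if i = j then (1:ℝ) else 0)))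
          + 2*(F i j k * ((y₁ - 1/(((n:ℝ)-1)*((n:ℝ)+2))) * T2 i * (if j = k then (1:ℝ) else 0)))
          + 2*(F i j k * ((y₂ + ((n:ℝ)+1)/(((n:ℝ)-1)*((n:ℝ)+2))) * T2 j * (if i = k then (1:ℝ) else 0)))
          + 2*(F i j k * ((y₃ - 1/(((n:ℝ)-1)*((n:ℝ)+2))) * T2 k * (if i = j then (1:ℝ) else 0)))
          + 2*(F i j k * ((z₁ - 1/(((n:ℝ)-1)*((n:ℝ)+2))) * T3 i * (if j = k then (1:ℝ) else 0)))
          + 2*(F i j k * ((z₂ - 1/(((n:ℝ)-1)*((n:ℝ)+2))) * T3 j * (if i = k then (1:ℝ) else 0)))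
          + 2*(F i j k * ((z₃ + ((n:ℝ)+1)/(((n:ℝ)-1)*((n:ℝ)+2))) * T3 k * (if i = j then (1:ℝ) else 0)))) := by
    intro i j k
    simp only [hF]
    ring
  simp only [key2, Finset.sum_add_distrib]
  rw [O1 (fun i => (x₁ + ((n:ℝ)+1)/(((n:ℝ)-1)*((n:ℝ)+2))) * T1 i),
    O2 (fun j => (x₂ - 1/(((n:ℝ)-1)*((n:ℝ)+2))) * T1 j),
    O3 (fun k => (x₃ - 1/(((n:ℝ)-1)*((n:ℝ)+2))) * T1 k),
    O1 (fun i => (y₁ - 1/(((n:ℝ)-1)*((n:ℝ)+2))) * T2 i),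
    O2 (fun j => (y₂ + ((n:ℝ)+1)/(((n:ℝ)-1)*((n:ℝ)+2))) * T2 j),
    O3 (fun k => (y₃ - 1/(((n:ℝ)-1)*((n:ℝ)+2))) * T2 k),
    O1 (fun i => (z₁ - 1/(((n:ℝ)-1)*((n:ℝ)+2))) * T3 i),
    O2 (fun j => (z₂ - 1/(((n:ℝ)-1)*((n:ℝ)+2))) * T3 j),
    O3 (fun k => (z₃ + ((n:ℝ)+1)/(((n:ℝ)-1)*((n:ℝ)+2))) * T3 k)]
  have hH : (0:ℝ) ≤ ∑ i, ∑ j, ∑ k,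
      ((x₁ + ((n:ℝ)+1)/(((n:ℝ)-1)*((n:ℝ)+2))) * T1 i * (if j = k then (1:ℝ) else 0)
        + (x₂ - 1/(((n:ℝ)-1)*((n:ℝ)+2))) * T1 j * (if i = k then (1:ℝ) else 0)
        + (x₃ - 1/(((n:ℝ)-1)*((n:ℝ)+2))) * T1 k * (if i = j then (1:ℝ) else 0)
        + (y₁ - 1/(((n:ℝ)-1)*((n:ℝ)+2))) * T2 i * (if j = k then (1:ℝ) else 0)
        + (y₂ + ((n:ℝ)+1)/(((n:ℝ)-1)*((n:ℝ)+2))) * T2 j * (if i = k then (1:ℝ) else 0)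
        + (y₃ - 1/(((n:ℝ)-1)*((n:ℝ)+2))) * T2 k * (if i = j then (1:ℝ) else 0)
        + (z₁ - 1/(((n:ℝ)-1)*((n:ℝ)+2))) * T3 i * (if j = k then (1:ℝ) else 0)
        + (z₂ - 1/(((n:ℝ)-1)*((n:ℝ)+2))) * T3 j * (if i = k then (1:ℝ) else 0)
        + (z₃ + ((n:ℝ)+1)/(((n:ℝ)-1)*((n:ℝ)+2))) * T3 k * (if i = j then (1:ℝ) else 0)) ^ 2 := by
    positivity
  linarith
end

section
/- For any third-order tensor T : Fin n → Fin n → Fin n → ℝ with n ≥ 2, the quadratic inequality ∑_{i,j,k} (T i j k)² ≥ ((n+1)/((n-1)(n+2)))(‖T¹‖² + ‖T²‖² + ‖T³‖²) - (2/((n-1)(n+2)))(⟨T¹,T²⟩ + ⟨T¹,T³⟩ + ⟨T²,T³⟩) holds, where T¹, T², T³ are the three partial traces. -/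
private lemma expand_aux (x u v w : ℝ) (p q r : Prop)
    [Decidable p] [Decidable q] [Decidable r] :
    (x - (if q then u else 0) - (if p then v else 0) - (if r then w else 0))^2 =
      x^2 + (if q then u^2 else 0) + (if p then v^2 else 0) + (if r then w^2 else 0)
      + (-2) * (if q then x * u else 0)
      + (-2) * (if p then x * v else 0)
      + (-2) * (if r then x * w else 0)
      + 2 * (if q ∧ p then u * v else 0)
      + 2 * (if q ∧ r then u * w else 0)
      + 2 * (if p ∧ r then v * w else 0) := by
  split_ifs <;> first | ring1 | tauto

theorem stmt3 (n : ℕ) (hn : 2 ≤ n) (T : Fin n → Fin n → Fin n → ℝ)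
    (T1 T2 T3 : Fin n → ℝ)
    (hT1 : ∀ i, T1 i = ∑ l, T i l l)
    (hT2 : ∀ i, T2 i = ∑ l, T l i l)
    (hT3 : ∀ i, T3 i = ∑ l, T l l i) :
    ∑ i, ∑ j, ∑ k, (T i j k) ^ 2
      ≥ (((n : ℝ) + 1) / (((n : ℝ) - 1) * ((n : ℝ) + 2))) *
          ((∑ i, (T1 i) ^ 2) + (∑ i, (T2 i) ^ 2) + (∑ i, (T3 i) ^ 2))
        - (2 / (((n : ℝ) - 1) * ((n : ℝ) + 2))) *
            ((∑ i, T1 i * T2 i) + (∑ i, T1 i * T3 i) + (∑ i, T2 i * T3 i)) := by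
  have hn2 : (2:ℝ) ≤ (n:ℝ) := by exact_mod_cast hn
  set D : ℝ := ((n:ℝ) - 1) * ((n:ℝ) + 2) with hDdef
  have hD : 0 < D := by
    have h1 : (0:ℝ) < (n:ℝ) - 1 := by linarith
    have h2 : (0:ℝ) < (n:ℝ) + 2 := by linarith
    exact mul_pos h1 h2
  have hD0 : D ≠ 0 := ne_of_gt hD
  set α : ℝ := ((n:ℝ) + 1) / D with hα
  set β : ℝ := -1 / D with hβ
  set a : Fin n → ℝ := fun i => α * T1 i + β * (T2 i + T3 i) with ha
  set b : Fin n → ℝ := fun i => α * T2 i + β * (T1 i + T3 i) with hb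
  set c : Fin n → ℝ := fun i => α * T3 i + β * (T1 i + T2 i) with hc
  set F : Fin n → Fin n → Fin n → ℝ := fun i j k =>
    T i j k - (if j = k then a i else 0) - (if i = k then b j else 0)
      - (if i = j then c k else 0) with hF
  -- expansion of the square
  have expand : ∀ i j k : Fin n, (F i j k)^2 =
      (T i j k)^2
      + (if j = k then (a i)^2 else 0)
      + (if i = k then (b j)^2 else 0)
      + (if i = j then (c k)^2 else 0)
      + (-2) * (if j = k then T i j k * a i else 0)
      + (-2) * (if i = k then T i j k * b j else 0)
      + (-2) * (if i = j then T i j k * c k else 0)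
      + 2 * (if j = k ∧ i = k then a i * b j else 0)
      + 2 * (if j = k ∧ i = j then a i * c k else 0)
      + 2 * (if i = k ∧ i = j then b j * c k else 0) := by
    intro i j k
    simp only [hF]
    exact expand_aux (T i j k) (a i) (b j) (c k) (i = k) (j = k) (i = j)
  -- the nine auxiliary sums
  have L1 : ∑ i : Fin n, ∑ j : Fin n, ∑ k : Fin n, (if j = k then (a i)^2 else 0)
      = (n:ℝ) * ∑ i, (a i)^2 := by
    simp [Finset.sum_ite_eq, Finset.mul_sum]
  have L2 : ∑ i : Fin n, ∑ j : Fin n, ∑ k : Fin n, (if i = k then (b j)^2 else 0)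
      = (n:ℝ) * ∑ i, (b i)^2 := by
    simp [Finset.sum_ite_eq, Finset.mul_sum]
  have L3 : ∑ i : Fin n, ∑ j : Fin n, ∑ k : Fin n, (if i = j then (c k)^2 else 0)
      = (n:ℝ) * ∑ i, (c i)^2 := by
    simp [Finset.sum_ite_eq, Finset.mul_sum]
  have L4 : ∑ i : Fin n, ∑ j : Fin n, ∑ k : Fin n,
        (-2:ℝ) * (if j = k then T i j k * a i else 0)
      = (-2) * ∑ i, a i * T1 i := by
    simp [Finset.sum_ite_eq, hT1, Finset.mul_sum]
    apply Finset.sum_congr rfl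
    intro i _
    exact Finset.sum_congr rfl fun _ _ => by ring
  have L5 : ∑ i : Fin n, ∑ j : Fin n, ∑ k : Fin n,
        (-2:ℝ) * (if i = k then T i j k * b j else 0)
      = (-2) * ∑ i, b i * T2 i := by
    rw [Finset.sum_comm]
    simp [Finset.sum_ite_eq, hT2, Finset.mul_sum]
    apply Finset.sum_congr rfl
    intro j _
    exact Finset.sum_congr rfl fun _ _ => by ring
  have L6 : ∑ i : Fin n, ∑ j : Fin n, ∑ k : Fin n,
        (-2:ℝ) * (if i = j then T i j k * c k else 0)
      = (-2) * ∑ i, c i * T3 i := by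
    have h : ∀ i : Fin n, (∑ j : Fin n, ∑ k : Fin n,
          (-2:ℝ) * (if i = j then T i j k * c k else 0))
        = ∑ k : Fin n, (-2:ℝ) * (T i i k * c k) := by
      intro i
      rw [Finset.sum_comm]
      simp [Finset.sum_ite_eq]
    simp only [h]
    rw [Finset.sum_comm]
    simp [hT3, Finset.mul_sum]
    apply Finset.sum_congr rfl
    intro k _
    exact Finset.sum_congr rfl fun _ _ => by ring
  have L7 : ∑ i : Fin n, ∑ j : Fin n, ∑ k : Fin n,
        (2:ℝ) * (if j = k ∧ i = k then a i * b j else 0)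
      = 2 * ∑ i, a i * b i := by
    simp [ite_and, Finset.sum_ite_eq, Finset.mul_sum]
  have L8 : ∑ i : Fin n, ∑ j : Fin n, ∑ k : Fin n,
        (2:ℝ) * (if j = k ∧ i = j then a i * c k else 0)
      = 2 * ∑ i, a i * c i := by
    simp [ite_and, Finset.sum_ite_eq, Finset.mul_sum]
  have L9 : ∑ i : Fin n, ∑ j : Fin n, ∑ k : Fin n,
        (2:ℝ) * (if i = k ∧ i = j then b j * c k else 0)
      = 2 * ∑ i, b i * c i := by
    simp [ite_and, Finset.sum_ite_eq, Finset.mul_sum]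
  -- the key expansion identity
  have key : ∑ i, ∑ j, ∑ k, (F i j k)^2
      = (∑ i, ∑ j, ∑ k, (T i j k)^2)
        + ((n:ℝ) * ∑ i, (a i)^2) + ((n:ℝ) * ∑ i, (b i)^2) + ((n:ℝ) * ∑ i, (c i)^2)
        + ((-2) * ∑ i, a i * T1 i) + ((-2) * ∑ i, b i * T2 i) + ((-2) * ∑ i, c i * T3 i)
        + (2 * ∑ i, a i * b i) + (2 * ∑ i, a i * c i) + (2 * ∑ i, b i * c i) := by
    simp only [expand, Finset.sum_add_distrib]
    rw [L1, L2, L3, L4, L5, L6, L7, L8, L9]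
    
  -- rewrite the RHS of the target as a single sum
  have hRHS : α * ((∑ i, (T1 i)^2) + (∑ i, (T2 i)^2) + (∑ i, (T3 i)^2))
        - (2 / D) * ((∑ i, T1 i * T2 i) + (∑ i, T1 i * T3 i) + (∑ i, T2 i * T3 i))
      = ∑ i, (α * ((T1 i)^2 + (T2 i)^2 + (T3 i)^2)
          - (2 / D) * (T1 i * T2 i + T1 i * T3 i + T2 i * T3 i)) := by
    rw [← Finset.sum_add_distrib, ← Finset.sum_add_distrib, ← Finset.sum_add_distrib,
      ← Finset.sum_add_distrib, Finset.mul_sum, Finset.mul_sum, ← Finset.sum_sub_distrib]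
  -- rewrite the combination from `key` as a single sum
  have hCOMB : ((n:ℝ) * ∑ i, (a i)^2) + ((n:ℝ) * ∑ i, (b i)^2) + ((n:ℝ) * ∑ i, (c i)^2)
        + ((-2) * ∑ i, a i * T1 i) + ((-2) * ∑ i, b i * T2 i) + ((-2) * ∑ i, c i * T3 i)
        + (2 * ∑ i, a i * b i) + (2 * ∑ i, a i * c i) + (2 * ∑ i, b i * c i)
      = ∑ i, ((n:ℝ) * (a i)^2 + (n:ℝ) * (b i)^2 + (n:ℝ) * (c i)^2
          + (-2) * (a i * T1 i) + (-2) * (b i * T2 i) + (-2) * (c i * T3 i)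
          + 2 * (a i * b i) + 2 * (a i * c i) + 2 * (b i * c i)) := by
    rw [Finset.mul_sum, Finset.mul_sum, Finset.mul_sum, Finset.mul_sum, Finset.mul_sum,
      Finset.mul_sum, Finset.mul_sum, Finset.mul_sum, Finset.mul_sum,
      ← Finset.sum_add_distrib, ← Finset.sum_add_distrib, ← Finset.sum_add_distrib,
      ← Finset.sum_add_distrib, ← Finset.sum_add_distrib, ← Finset.sum_add_distrib,
      ← Finset.sum_add_distrib, ← Finset.sum_add_distrib]
  -- pointwise identity: the combination equals minus the RHS integrand
  have hPT : ∀ i : Fin n,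
      ((n:ℝ) * (a i)^2 + (n:ℝ) * (b i)^2 + (n:ℝ) * (c i)^2
        + (-2) * (a i * T1 i) + (-2) * (b i * T2 i) + (-2) * (c i * T3 i)
        + 2 * (a i * b i) + 2 * (a i * c i) + 2 * (b i * c i))
      = -(α * ((T1 i)^2 + (T2 i)^2 + (T3 i)^2)
          - (2 / D) * (T1 i * T2 i + T1 i * T3 i + T2 i * T3 i)) := by
    intro i
    simp only [ha, hb, hc, hα, hβ]
    field_simp
    ring
  have hCOMB2 : ∑ i, ((n:ℝ) * (a i)^2 + (n:ℝ) * (b i)^2 + (n:ℝ) * (c i)^2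
        + (-2) * (a i * T1 i) + (-2) * (b i * T2 i) + (-2) * (c i * T3 i)
        + 2 * (a i * b i) + 2 * (a i * c i) + 2 * (b i * c i))
      = -∑ i, (α * ((T1 i)^2 + (T2 i)^2 + (T3 i)^2)
          - (2 / D) * (T1 i * T2 i + T1 i * T3 i + T2 i * T3 i)) := by
    rw [← Finset.sum_neg_distrib]
    exact Finset.sum_congr rfl fun i _ => hPT i
  have hF2 : 0 ≤ ∑ i, ∑ j, ∑ k, (F i j k)^2 := by
    apply Finset.sum_nonneg; intro i _
    apply Finset.sum_nonneg; intro j _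
    apply Finset.sum_nonneg; intro k _
    positivity
  have keyfinal : ∑ i, ∑ j, ∑ k, (F i j k)^2
      = (∑ i, ∑ j, ∑ k, (T i j k)^2)
        - (α * ((∑ i, (T1 i)^2) + (∑ i, (T2 i)^2) + (∑ i, (T3 i)^2))
          - (2 / D) * ((∑ i, T1 i * T2 i) + (∑ i, T1 i * T3 i) + (∑ i, T2 i * T3 i))) := by
    rw [key, hRHS]
    rw [show (∑ i, ∑ j, ∑ k, (T i j k)^2)
        + ((n:ℝ) * ∑ i, (a i)^2) + ((n:ℝ) * ∑ i, (b i)^2) + ((n:ℝ) * ∑ i, (c i)^2)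
        + ((-2) * ∑ i, a i * T1 i) + ((-2) * ∑ i, b i * T2 i) + ((-2) * ∑ i, c i * T3 i)
        + (2 * ∑ i, a i * b i) + (2 * ∑ i, a i * c i) + (2 * ∑ i, b i * c i)
      = (∑ i, ∑ j, ∑ k, (T i j k)^2)
        + (((n:ℝ) * ∑ i, (a i)^2) + ((n:ℝ) * ∑ i, (b i)^2) + ((n:ℝ) * ∑ i, (c i)^2)
        + ((-2) * ∑ i, a i * T1 i) + ((-2) * ∑ i, b i * T2 i) + ((-2) * ∑ i, c i * T3 i)
        + (2 * ∑ i, a i * b i) + (2 * ∑ i, a i * c i) + (2 * ∑ i, b i * c i)) by ring]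
    rw [hCOMB, hCOMB2]
    ring
  linarith [keyfinal, hF2]
end

section
/- Let T : Fin n → Fin n → Fin n → ℝ be a third-order tensor whose first partial trace vanishes and whose second and third traces are opposite: T¹ = 0 and T³ = -T². Then the trace-free minimal norm tensor of T equals F i j k = T i j k - (1/(n-1))(T²ⱼ δᵢₖ - T²ₖ δᵢⱼ) (assuming n ≥ 2), i.e. the general formula of Theorem 1.1 simplifies to this expression under these hypotheses. -/
theorem stmt4 (n : ℕ) (hn : 2 ≤ n) (T : Fin n → Fin n → Fin n → ℝ)
    (T1 T2 T3 : Fin n → ℝ)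
    (hT1 : ∀ i, T1 i = ∑ l, T i l l)
    (hT2 : ∀ i, T2 i = ∑ l, T l i l)
    (hT3 : ∀ i, T3 i = ∑ l, T l l i)
    (h1 : ∀ i, T1 i = 0)
    (h3 : ∀ i, T3 i = - T2 i) :
    ∀ i j k,
      (T i j k
        - (((n : ℝ) + 1) / (((n : ℝ) - 1) * ((n : ℝ) + 2))) *
            (T1 i * (if j = k then (1:ℝ) else 0)
             + T2 j * (if i = k then (1:ℝ) else 0)
             + T3 k * (if i = j then (1:ℝ) else 0))
        + (1 / (((n : ℝ) - 1) * ((n : ℝ) + 2))) *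
            (T1 j * (if i = k then (1:ℝ) else 0)
             + T1 k * (if i = j then (1:ℝ) else 0)
             + T2 i * (if j = k then (1:ℝ) else 0)
             + T2 k * (if i = j then (1:ℝ) else 0)
             + T3 i * (if j = k then (1:ℝ) else 0)
             + T3 j * (if i = k then (1:ℝ) else 0)))
      = T i j k
        - (1 / ((n : ℝ) - 1)) *
            (T2 j * (if i = k then (1:ℝ) else 0)
             - T2 k * (if i = j then (1:ℝ) else 0)) := by
  intro i j k
  have hn1 : (n : ℝ) - 1 ≠ 0 := by
    have : (2:ℝ) ≤ n := by exact_mod_cast hn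
    linarith
  have hn2 : (n : ℝ) + 2 ≠ 0 := by positivity
  simp only [h1, h3]
  split_ifs <;> field_simp <;> ring
end

section
/- Let T : Fin n → Fin n → Fin n → Fin n → ℝ be totally symmetric with n ≥ 3, with trace Tᵢⱼ = ∑ₗ T i j l l and double trace Tₛ, and let F be the trace-free part F i j k l = T i j k l - (1/(n+4))(Tᵢⱼ δₖₗ + Tᵢₖ δⱼₗ + Tᵢₗ δⱼₖ + Tⱼₖ δᵢₗ + Tⱼₗ δᵢₖ + Tₖₗ δᵢⱼ) + (Tₛ/((n+4)(n+2)))(δᵢⱼ δₖₗ + δᵢₖ δⱼₗ + δᵢₗ δⱼₖ). Then ∑_{i,j,k,l} (F i j k l)² = ∑_{i,j,k,l} (T i j k l)² - (6/(n+4)) ∑_{i,j} (Tᵢⱼ)² + 3 Tₛ²/((n+4)(n+2)). -/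
lemma pair_sum_aux {n : ℕ} (G : Fin n → Fin n → Fin n → Fin n → ℝ)
    (s12 : ∀ i j k l, G i j k l = G j i k l)
    (s23 : ∀ i j k l, G i j k l = G i k j l)
    (s34 : ∀ i j k l, G i j k l = G i j l k)
    (c : Fin n → Fin n → ℝ) :
    ∑ i, ∑ j, ∑ k, ∑ l, G i j k l *
      (c i j * (if k = l then (1:ℝ) else 0)
       + c i k * (if j = l then (1:ℝ) else 0)
       + c i l * (if j = k then (1:ℝ) else 0)
       + c j k * (if i = l then (1:ℝ) else 0)
       + c j l * (if i = k then (1:ℝ) else 0)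
       + c k l * (if i = j then (1:ℝ) else 0))
    = 6 * ∑ i, ∑ j, (∑ l, G i j l l) * c i j := by
  have h1 : ∑ i, ∑ j, ∑ k, ∑ l, G i j k l * (c i j * (if k = l then (1:ℝ) else 0))
      = ∑ i, ∑ j, (∑ l, G i j l l) * c i j := by
    have e : ∀ i j k, ∑ l, G i j k l * (c i j * (if k = l then (1:ℝ) else 0))
        = G i j k k * c i j := by intro i j k; simp [mul_ite, Finset.sum_ite_eq]
    simp only [e, ← Finset.sum_mul]
  have h2 : ∑ i, ∑ j, ∑ k, ∑ l, G i j k l * (c i k * (if j = l then (1:ℝ) else 0))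
      = ∑ i, ∑ j, (∑ l, G i j l l) * c i j := by
    have e : ∀ i j k, ∑ l, G i j k l * (c i k * (if j = l then (1:ℝ) else 0))
        = G i k j j * c i k := by
      intro i j k
      have e2 : G i j k j = G i k j j := by rw [s23]
      simp [mul_ite, Finset.sum_ite_eq, e2]
    simp only [e]
    refine Finset.sum_congr rfl fun i _ => ?_
    rw [Finset.sum_comm]
    simp only [← Finset.sum_mul]
  have h3 : ∑ i, ∑ j, ∑ k, ∑ l, G i j k l * (c i l * (if j = k then (1:ℝ) else 0))
      = ∑ i, ∑ j, (∑ l, G i j l l) * c i j := by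
    have e : ∀ i j, ∑ k, ∑ l, G i j k l * (c i l * (if j = k then (1:ℝ) else 0))
        = ∑ l, G i l j j * c i l := by
      intro i j
      have e2 : ∀ l, G i j j l = G i l j j := by intro l; rw [s34, s23]
      simp [mul_ite, Finset.sum_ite_irrel, Finset.sum_ite_eq, Finset.sum_const_zero, e2]
    simp only [e]
    refine Finset.sum_congr rfl fun i _ => ?_
    rw [Finset.sum_comm]
    simp only [← Finset.sum_mul]
  have h4 : ∑ i, ∑ j, ∑ k, ∑ l, G i j k l * (c j k * (if i = l then (1:ℝ) else 0))
      = ∑ i, ∑ j, (∑ l, G i j l l) * c i j := by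
    have e : ∀ i j k, ∑ l, G i j k l * (c j k * (if i = l then (1:ℝ) else 0))
        = G j k i i * c j k := by
      intro i j k
      have e2 : G i j k i = G j k i i := by rw [s12, s23]
      simp [mul_ite, Finset.sum_ite_eq, e2]
    simp only [e]
    rw [Finset.sum_comm]
    refine Finset.sum_congr rfl fun j _ => ?_
    rw [Finset.sum_comm]
    simp only [← Finset.sum_mul]
  have h5 : ∑ i, ∑ j, ∑ k, ∑ l, G i j k l * (c j l * (if i = k then (1:ℝ) else 0))
      = ∑ i, ∑ j, (∑ l, G i j l l) * c i j := by
    have e : ∀ i j, ∑ k, ∑ l, G i j k l * (c j l * (if i = k then (1:ℝ) else 0))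
        = ∑ l, G j l i i * c j l := by
      intro i j
      have e2 : ∀ l, G i j i l = G j l i i := by intro l; rw [s12, s34, s23]
      simp [mul_ite, Finset.sum_ite_irrel, Finset.sum_ite_eq, Finset.sum_const_zero, e2]
    simp only [e]
    rw [Finset.sum_comm]
    refine Finset.sum_congr rfl fun j _ => ?_
    rw [Finset.sum_comm]
    simp only [← Finset.sum_mul]
  have h6 : ∑ i, ∑ j, ∑ k, ∑ l, G i j k l * (c k l * (if i = j then (1:ℝ) else 0))
      = ∑ i, ∑ j, (∑ l, G i j l l) * c i j := by
    have e : ∀ i, ∑ j, ∑ k, ∑ l, G i j k l * (c k l * (if i = j then (1:ℝ) else 0))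
        = ∑ k, ∑ l, G k l i i * c k l := by
      intro i
      have e2 : ∀ k l, G i i k l = G k l i i := by
        intro k l; rw [s23, s12, s34, s23]
      simp [mul_ite, Finset.sum_ite_irrel, Finset.sum_ite_eq, Finset.sum_const_zero, e2]
    simp only [e]
    rw [Finset.sum_comm]
    refine Finset.sum_congr rfl fun j _ => ?_
    rw [Finset.sum_comm]
    refine Finset.sum_congr rfl fun k _ => ?_
    rw [← Finset.sum_mul]
  have dist : ∀ i j k l : Fin n, G i j k l *
      (c i j * (if k = l then (1:ℝ) else 0)
       + c i k * (if j = l then (1:ℝ) else 0)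
       + c i l * (if j = k then (1:ℝ) else 0)
       + c j k * (if i = l then (1:ℝ) else 0)
       + c j l * (if i = k then (1:ℝ) else 0)
       + c k l * (if i = j then (1:ℝ) else 0))
      = G i j k l * (c i j * (if k = l then (1:ℝ) else 0))
        + G i j k l * (c i k * (if j = l then (1:ℝ) else 0))
        + G i j k l * (c i l * (if j = k then (1:ℝ) else 0))
        + G i j k l * (c j k * (if i = l then (1:ℝ) else 0))
        + G i j k l * (c j l * (if i = k then (1:ℝ) else 0))
        + G i j k l * (c k l * (if i = j then (1:ℝ) else 0)) := by
    intro i j k l; ring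
  simp only [dist, Finset.sum_add_distrib]
  rw [h1, h2, h3, h4, h5, h6]; ring

lemma delta_sum_aux {n : ℕ} (G : Fin n → Fin n → Fin n → Fin n → ℝ)
    (s23 : ∀ i j k l, G i j k l = G i k j l)
    (s34 : ∀ i j k l, G i j k l = G i j l k) :
    ∑ i, ∑ j, ∑ k, ∑ l, G i j k l *
      ((if i = j then (1:ℝ) else 0) * (if k = l then (1:ℝ) else 0)
       + (if i = k then (1:ℝ) else 0) * (if j = l then (1:ℝ) else 0)
       + (if i = l then (1:ℝ) else 0) * (if j = k then (1:ℝ) else 0))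
    = 3 * ∑ i, ∑ j, G i i j j := by
  have h1 : ∑ i, ∑ j, ∑ k, ∑ l, G i j k l *
      ((if i = j then (1:ℝ) else 0) * (if k = l then (1:ℝ) else 0))
      = ∑ i, ∑ j, G i i j j := by
    have e : ∀ i, ∑ j, ∑ k, ∑ l, G i j k l *
        ((if i = j then (1:ℝ) else 0) * (if k = l then (1:ℝ) else 0))
        = ∑ k, G i i k k := by
      simp [mul_ite, ite_mul, Finset.sum_ite_irrel, Finset.sum_ite_eq,
        Finset.sum_const_zero]
    simp only [e]
  have h2 : ∑ i, ∑ j, ∑ k, ∑ l, G i j k l *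
      ((if i = k then (1:ℝ) else 0) * (if j = l then (1:ℝ) else 0))
      = ∑ i, ∑ j, G i i j j := by
    have e : ∀ i j, ∑ k, ∑ l, G i j k l *
        ((if i = k then (1:ℝ) else 0) * (if j = l then (1:ℝ) else 0))
        = G i i j j := by
      intro i j
      have e2 : G i j i j = G i i j j := by rw [s23]
      simp [mul_ite, ite_mul, Finset.sum_ite_irrel, Finset.sum_ite_eq,
        Finset.sum_const_zero, e2]
    simp only [e]
  have h3 : ∑ i, ∑ j, ∑ k, ∑ l, G i j k l *
      ((if i = l then (1:ℝ) else 0) * (if j = k then (1:ℝ) else 0))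
      = ∑ i, ∑ j, G i i j j := by
    have e : ∀ i j, ∑ k, ∑ l, G i j k l *
        ((if i = l then (1:ℝ) else 0) * (if j = k then (1:ℝ) else 0))
        = G i i j j := by
      intro i j
      have e2 : G i j j i = G i i j j := by rw [s34, s23]
      simp [mul_ite, ite_mul, Finset.sum_ite_irrel, Finset.sum_ite_eq,
        Finset.sum_const_zero, e2]
    simp only [e]
  have dist : ∀ i j k l : Fin n, G i j k l *
      ((if i = j then (1:ℝ) else 0) * (if k = l then (1:ℝ) else 0)
       + (if i = k then (1:ℝ) else 0) * (if j = l then (1:ℝ) else 0)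
       + (if i = l then (1:ℝ) else 0) * (if j = k then (1:ℝ) else 0))
      = G i j k l * ((if i = j then (1:ℝ) else 0) * (if k = l then (1:ℝ) else 0))
        + G i j k l * ((if i = k then (1:ℝ) else 0) * (if j = l then (1:ℝ) else 0))
        + G i j k l * ((if i = l then (1:ℝ) else 0) * (if j = k then (1:ℝ) else 0)) := by
    intro i j k l; ring
  simp only [dist, Finset.sum_add_distrib]
  rw [h1, h2, h3]; ring


theorem stmt8 (n : ℕ) (hn : 3 ≤ n) (T : Fin n → Fin n → Fin n → Fin n → ℝ)
    (hsym12 : ∀ i j k l, T i j k l = T j i k l)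
    (hsym23 : ∀ i j k l, T i j k l = T i k j l)
    (hsym34 : ∀ i j k l, T i j k l = T i j l k)
    (T2 : Fin n → Fin n → ℝ) (hT2 : ∀ i j, T2 i j = ∑ l, T i j l l)
    (Ts : ℝ) (hTs : Ts = ∑ k, ∑ l, T k k l l)
    (F : Fin n → Fin n → Fin n → Fin n → ℝ)
    (hF : ∀ i j k l, F i j k l = T i j k l
      - (1 / ((n : ℝ) + 4)) *
          (T2 i j * (if k = l then (1:ℝ) else 0)
           + T2 i k * (if j = l then (1:ℝ) else 0)
           + T2 i l * (if j = k then (1:ℝ) else 0)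
           + T2 j k * (if i = l then (1:ℝ) else 0)
           + T2 j l * (if i = k then (1:ℝ) else 0)
           + T2 k l * (if i = j then (1:ℝ) else 0))
      + (Ts / (((n : ℝ) + 4) * ((n : ℝ) + 2))) *
          ((if i = j then (1:ℝ) else 0) * (if k = l then (1:ℝ) else 0)
           + (if i = k then (1:ℝ) else 0) * (if j = l then (1:ℝ) else 0)
           + (if i = l then (1:ℝ) else 0) * (if j = k then (1:ℝ) else 0))) :
    ∑ i, ∑ j, ∑ k, ∑ l, (F i j k l) ^ 2
      = ∑ i, ∑ j, ∑ k, ∑ l, (T i j k l) ^ 2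
        - (6 / ((n : ℝ) + 4)) * ∑ i, ∑ j, (T2 i j) ^ 2
        + 3 * Ts ^ 2 / (((n : ℝ) + 4) * ((n : ℝ) + 2)) := by
  have hne4 : ((n : ℝ) + 4) ≠ 0 := by positivity
  have hne2 : ((n : ℝ) + 2) ≠ 0 := by positivity
  have dsw : ∀ a b : Fin n, (if a = b then (1:ℝ) else 0) = (if b = a then (1:ℝ) else 0) := by
    intro a b; simp [eq_comm]
  have hT2s : ∀ i j, T2 i j = T2 j i := by
    intro i j; rw [hT2, hT2]
    exact Finset.sum_congr rfl fun l _ => hsym12 i j l l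
  have hFs12 : ∀ i j k l, F i j k l = F j i k l := by
    intro i j k l
    rw [hF i j k l, hF j i k l, hsym12 i j k l, hT2s j i, dsw j i]; ring
  have hFs23 : ∀ i j k l, F i j k l = F i k j l := by
    intro i j k l
    rw [hF i j k l, hF i k j l, hsym23 i j k l, hT2s k j, dsw k j]; ring
  have hFs34 : ∀ i j k l, F i j k l = F i j l k := by
    intro i j k l
    rw [hF i j k l, hF i j l k, hsym34 i j k l, hT2s l k, dsw l k]; ring
  have hTsum : ∑ l : Fin n, T2 l l = Ts := by
    rw [hTs]; exact Finset.sum_congr rfl fun k _ => hT2 k k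
  have hF2zero : ∀ i j, ∑ l, F i j l l = 0 := by
    intro i j
    have e2 : ∑ l : Fin n, T2 i l * (if j = l then (1:ℝ) else 0) = T2 i j := by
      simp [mul_ite, Finset.sum_ite_eq]
    have e4 : ∑ l : Fin n, T2 j l * (if i = l then (1:ℝ) else 0) = T2 j i := by
      simp [mul_ite, Finset.sum_ite_eq]
    have e6 : ∑ l : Fin n, T2 l l * (if i = j then (1:ℝ) else 0)
        = Ts * (if i = j then (1:ℝ) else 0) := by
      rw [← Finset.sum_mul, hTsum]
    have d2 : ∑ l : Fin n, (if i = l then (1:ℝ) else 0) * (if j = l then (1:ℝ) else 0)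
        = (if i = j then (1:ℝ) else 0) := by
      simp [ite_mul, Finset.sum_ite_eq, eq_comm]
    have expand : ∀ l : Fin n, F i j l l = T i j l l
        - (1 / ((n : ℝ) + 4)) * (T2 i j * (if l = l then (1:ℝ) else 0))
        - (1 / ((n : ℝ) + 4)) * (T2 i l * (if j = l then (1:ℝ) else 0))
        - (1 / ((n : ℝ) + 4)) * (T2 i l * (if j = l then (1:ℝ) else 0))
        - (1 / ((n : ℝ) + 4)) * (T2 j l * (if i = l then (1:ℝ) else 0))
        - (1 / ((n : ℝ) + 4)) * (T2 j l * (if i = l then (1:ℝ) else 0))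
        - (1 / ((n : ℝ) + 4)) * (T2 l l * (if i = j then (1:ℝ) else 0))
        + (Ts / (((n : ℝ) + 4) * ((n : ℝ) + 2))) *
            ((if i = j then (1:ℝ) else 0) * (if l = l then (1:ℝ) else 0))
        + (Ts / (((n : ℝ) + 4) * ((n : ℝ) + 2))) *
            ((if i = l then (1:ℝ) else 0) * (if j = l then (1:ℝ) else 0))
        + (Ts / (((n : ℝ) + 4) * ((n : ℝ) + 2))) *
            ((if i = l then (1:ℝ) else 0) * (if j = l then (1:ℝ) else 0)) := by
      intro l; rw [hF]; ring
    rw [Finset.sum_congr rfl fun l _ => expand l]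
    simp only [Finset.sum_add_distrib, Finset.sum_sub_distrib, ← Finset.mul_sum,
      if_pos rfl, mul_one, e2, e4, e6, d2, ← hT2, Finset.sum_const, Finset.card_univ,
      Fintype.card_fin, nsmul_eq_mul]
    rw [hT2s j i]
    by_cases hij : i = j
    · simp only [hij, if_pos rfl, ↓reduceIte]
      field_simp
      ring
    · simp only [if_neg hij, mul_zero, mul_one, add_zero, zero_add, ↓reduceIte]
      field_simp
      ring
  have hFS : ∑ i, ∑ j, ∑ k, ∑ l, F i j k l *
      (T2 i j * (if k = l then (1:ℝ) else 0)
       + T2 i k * (if j = l then (1:ℝ) else 0)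
       + T2 i l * (if j = k then (1:ℝ) else 0)
       + T2 j k * (if i = l then (1:ℝ) else 0)
       + T2 j l * (if i = k then (1:ℝ) else 0)
       + T2 k l * (if i = j then (1:ℝ) else 0)) = 0 := by
    rw [pair_sum_aux F hFs12 hFs23 hFs34 T2]
    simp [hF2zero]
  have hFD : ∑ i, ∑ j, ∑ k, ∑ l, F i j k l *
      ((if i = j then (1:ℝ) else 0) * (if k = l then (1:ℝ) else 0)
       + (if i = k then (1:ℝ) else 0) * (if j = l then (1:ℝ) else 0)
       + (if i = l then (1:ℝ) else 0) * (if j = k then (1:ℝ) else 0)) = 0 := by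
    rw [delta_sum_aux F hFs23 hFs34]
    simp [hF2zero]
  have hTS : ∑ i, ∑ j, ∑ k, ∑ l, T i j k l *
      (T2 i j * (if k = l then (1:ℝ) else 0)
       + T2 i k * (if j = l then (1:ℝ) else 0)
       + T2 i l * (if j = k then (1:ℝ) else 0)
       + T2 j k * (if i = l then (1:ℝ) else 0)
       + T2 j l * (if i = k then (1:ℝ) else 0)
       + T2 k l * (if i = j then (1:ℝ) else 0))
      = 6 * ∑ i, ∑ j, (T2 i j) ^ 2 := by
    rw [pair_sum_aux T hsym12 hsym23 hsym34 T2]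
    congr 1
    refine Finset.sum_congr rfl fun i _ => Finset.sum_congr rfl fun j _ => ?_
    rw [← hT2]; ring
  have hTD : ∑ i, ∑ j, ∑ k, ∑ l, T i j k l *
      ((if i = j then (1:ℝ) else 0) * (if k = l then (1:ℝ) else 0)
       + (if i = k then (1:ℝ) else 0) * (if j = l then (1:ℝ) else 0)
       + (if i = l then (1:ℝ) else 0) * (if j = k then (1:ℝ) else 0)) = 3 * Ts := by
    rw [delta_sum_aux T hsym23 hsym34, hTs]
  have hsq : ∀ i j k l, F i j k l ^ 2 = F i j k l * T i j k l
      - (1 / ((n : ℝ) + 4)) * (F i j k l *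
          (T2 i j * (if k = l then (1:ℝ) else 0)
           + T2 i k * (if j = l then (1:ℝ) else 0)
           + T2 i l * (if j = k then (1:ℝ) else 0)
           + T2 j k * (if i = l then (1:ℝ) else 0)
           + T2 j l * (if i = k then (1:ℝ) else 0)
           + T2 k l * (if i = j then (1:ℝ) else 0)))
      + (Ts / (((n : ℝ) + 4) * ((n : ℝ) + 2))) * (F i j k l *
          ((if i = j then (1:ℝ) else 0) * (if k = l then (1:ℝ) else 0)
           + (if i = k then (1:ℝ) else 0) * (if j = l then (1:ℝ) else 0)
           + (if i = l then (1:ℝ) else 0) * (if j = k then (1:ℝ) else 0))) := by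
    intro i j k l; simp only [hF]; ring
  have hprod : ∀ i j k l, F i j k l * T i j k l = T i j k l ^ 2
      - (1 / ((n : ℝ) + 4)) * (T i j k l *
          (T2 i j * (if k = l then (1:ℝ) else 0)
           + T2 i k * (if j = l then (1:ℝ) else 0)
           + T2 i l * (if j = k then (1:ℝ) else 0)
           + T2 j k * (if i = l then (1:ℝ) else 0)
           + T2 j l * (if i = k then (1:ℝ) else 0)
           + T2 k l * (if i = j then (1:ℝ) else 0)))
      + (Ts / (((n : ℝ) + 4) * ((n : ℝ) + 2))) * (T i j k l *
          ((if i = j then (1:ℝ) else 0) * (if k = l then (1:ℝ) else 0)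
           + (if i = k then (1:ℝ) else 0) * (if j = l then (1:ℝ) else 0)
           + (if i = l then (1:ℝ) else 0) * (if j = k then (1:ℝ) else 0))) := by
    intro i j k l; simp only [hF]; ring
  have step1 : ∑ i, ∑ j, ∑ k, ∑ l, (F i j k l) ^ 2
      = (∑ i, ∑ j, ∑ k, ∑ l, F i j k l * T i j k l)
        - (1 / ((n : ℝ) + 4)) * (∑ i, ∑ j, ∑ k, ∑ l, F i j k l *
          (T2 i j * (if k = l then (1:ℝ) else 0)
           + T2 i k * (if j = l then (1:ℝ) else 0)
           + T2 i l * (if j = k then (1:ℝ) else 0)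
           + T2 j k * (if i = l then (1:ℝ) else 0)
           + T2 j l * (if i = k then (1:ℝ) else 0)
           + T2 k l * (if i = j then (1:ℝ) else 0)))
        + (Ts / (((n : ℝ) + 4) * ((n : ℝ) + 2))) * (∑ i, ∑ j, ∑ k, ∑ l, F i j k l *
          ((if i = j then (1:ℝ) else 0) * (if k = l then (1:ℝ) else 0)
           + (if i = k then (1:ℝ) else 0) * (if j = l then (1:ℝ) else 0)
           + (if i = l then (1:ℝ) else 0) * (if j = k then (1:ℝ) else 0))) := by
    simp only [hsq, Finset.sum_add_distrib, Finset.sum_sub_distrib, ← Finset.mul_sum]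
  have step2 : ∑ i, ∑ j, ∑ k, ∑ l, F i j k l * T i j k l
      = (∑ i, ∑ j, ∑ k, ∑ l, (T i j k l) ^ 2)
        - (1 / ((n : ℝ) + 4)) * (∑ i, ∑ j, ∑ k, ∑ l, T i j k l *
          (T2 i j * (if k = l then (1:ℝ) else 0)
           + T2 i k * (if j = l then (1:ℝ) else 0)
           + T2 i l * (if j = k then (1:ℝ) else 0)
           + T2 j k * (if i = l then (1:ℝ) else 0)
           + T2 j l * (if i = k then (1:ℝ) else 0)
           + T2 k l * (if i = j then (1:ℝ) else 0)))
        + (Ts / (((n : ℝ) + 4) * ((n : ℝ) + 2))) * (∑ i, ∑ j, ∑ k, ∑ l, T i j k l *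
          ((if i = j then (1:ℝ) else 0) * (if k = l then (1:ℝ) else 0)
           + (if i = k then (1:ℝ) else 0) * (if j = l then (1:ℝ) else 0)
           + (if i = l then (1:ℝ) else 0) * (if j = k then (1:ℝ) else 0))) := by
    simp only [hprod, Finset.sum_add_distrib, Finset.sum_sub_distrib, ← Finset.mul_sum]
  rw [step1, hFS, hFD, step2, hTS, hTD]
  ring
end

section
/- For any totally symmetric fourth-order tensor T on ℝ^n with n ≥ 3, the inequality ∑_{i,j,k,l} (T i j k l)² ≥ (6/(n+4)) ∑_{i,j} (Tᵢⱼ)² - 3 Tₛ²/((n+4)(n+2)) holds, where Tᵢⱼ = ∑ₗ T i j l l and Tₛ = ∑_{k,l} T k k l l. -/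
set_option linter.unnecessarySeqFocus false
open Finset

noncomputable def Uu {n : ℕ} (B : Fin n → Fin n → ℝ) (i j k l : Fin n) : ℝ :=
  (if i = j then (1:ℝ) else 0) * B k l
    + (if i = k then (1:ℝ) else 0) * B j l
    + (if i = l then (1:ℝ) else 0) * B j k
    + (if j = k then (1:ℝ) else 0) * B i l
    + (if j = l then (1:ℝ) else 0) * B i k
    + (if k = l then (1:ℝ) else 0) * B i j

lemma auxS2 {n : ℕ} (B : Fin n → Fin n → ℝ) (hB : ∀ i j, B i j = B j i) :
    ∑ i, ∑ j, ∑ k, ∑ l, (Uu B i j k l) ^ 2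
      = 6 * ((n:ℝ) + 4) * (∑ a, ∑ b, B a b * B a b) + 6 * (∑ a, B a a) ^ 2 := by
  have hA2 : ∀ x x1 : Fin n, B x x1 * B x1 x = B x x1 * B x x1 := by
    intro x x1; rw [hB x1 x]
  have hA4 : ∀ x x1 : Fin n, B x1 x * B x x1 = B x x1 * B x x1 := by
    intro x x1; rw [hB x1 x]
  have hA3 : ∀ x x1 : Fin n, B x1 x * B x1 x = B x x1 * B x x1 := by
    intro x x1; rw [hB x1 x]
  simp only [Uu, add_pow_two, add_mul, mul_add, Finset.sum_add_distrib, mul_ite, ite_mul, one_mul,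
    zero_mul, mul_zero, mul_one, Finset.sum_const_zero, Finset.sum_ite_irrel, Finset.sum_ite_eq,
    Finset.sum_ite_eq', Finset.mem_univ, if_true, pow_two, hA2, hA4, hA3,
    Finset.sum_const, Finset.card_univ, Fintype.card_fin, nsmul_eq_mul, ← Finset.mul_sum]
  have e1 : ∑ x : Fin n, ∑ x1 : Fin n, B x x * B x1 x1 = (∑ a, B a a) * (∑ a, B a a) := by
    rw [Finset.sum_mul_sum]
  have e2 : ∑ x : Fin n, ∑ x1 : Fin n, B x1 x1 * B x x = (∑ a, B a a) * (∑ a, B a a) := by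
    rw [Finset.sum_comm, Finset.sum_mul_sum]
  have e3 : ∑ x : Fin n, ∑ x1 : Fin n, B x x1 * B x x1
      = ∑ a : Fin n, ∑ b : Fin n, B a b * B a b := rfl
  have f1 : ∑ x : Fin n, B x x * ∑ i : Fin n, B i i = (∑ a, B a a) * (∑ a, B a a) :=
    (Finset.sum_mul univ (fun x => B x x) _).symm
  rw [f1, e2]
  ring

lemma sum3_comm {n : ℕ} (f : Fin n → Fin n → Fin n → ℝ) :
    ∑ x, ∑ a, ∑ b, f x a b = ∑ a, ∑ b, ∑ x, f x a b := by
  rw [Finset.sum_comm]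
  exact Finset.sum_congr rfl fun a _ => Finset.sum_comm

lemma auxS1 {n : ℕ} (T : Fin n → Fin n → Fin n → Fin n → ℝ)
    (hsym12 : ∀ i j k l, T i j k l = T j i k l)
    (hsym23 : ∀ i j k l, T i j k l = T i k j l)
    (hsym34 : ∀ i j k l, T i j k l = T i j l k)
    (T2 : Fin n → Fin n → ℝ) (hT2 : ∀ i j, T2 i j = ∑ l, T i j l l)
    (B : Fin n → Fin n → ℝ) :
    ∑ i, ∑ j, ∑ k, ∑ l, T i j k l * Uu B i j k l
      = 6 * ∑ a, ∑ b, T2 a b * B a b := by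
  have P1 : ∀ x a b : Fin n, T x x a b = T a b x x := by
    intro x a b
    rw [hsym23, hsym12, hsym34, hsym23]
  have P2 : ∀ x a b : Fin n, T x a x b = T a b x x := by
    intro x a b
    rw [← hsym23, P1]
  have P3 : ∀ x a b : Fin n, T x a b x = T a b x x := by
    intro x a b
    rw [hsym34, P2]
  have P4 : ∀ x r b : Fin n, T x r r b = T x b r r := by
    intro x r b
    rw [hsym34, hsym23]
  have P5 : ∀ x r b : Fin n, T x r b r = T x b r r := by
    intro x r b
    rw [hsym23]
  have key : ∀ g : Fin n → Fin n → Fin n → ℝ, (∀ a b x, g a b x = T a b x x * B a b) →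
      ∑ a, ∑ b, ∑ x, g a b x = ∑ a, ∑ b, T2 a b * B a b := by
    intro g hg
    refine Finset.sum_congr rfl fun a _ => Finset.sum_congr rfl fun b _ => ?_
    rw [hT2, Finset.sum_mul]
    exact Finset.sum_congr rfl fun x _ => hg a b x
  simp only [Uu, mul_add, Finset.sum_add_distrib, mul_ite, ite_mul, one_mul, zero_mul, mul_zero,
    mul_one, Finset.sum_const_zero, Finset.sum_ite_irrel, Finset.sum_ite_eq, Finset.sum_ite_eq',
    Finset.mem_univ, if_true]
  have t1 : ∑ x : Fin n, ∑ a : Fin n, ∑ b : Fin n, T x x a b * B a b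
      = ∑ a, ∑ b, T2 a b * B a b := by
    rw [sum3_comm]
    exact key _ fun a b x => by rw [P1]
  have t2 : ∑ x : Fin n, ∑ a : Fin n, ∑ b : Fin n, T x a x b * B a b
      = ∑ a, ∑ b, T2 a b * B a b := by
    rw [sum3_comm]
    exact key _ fun a b x => by rw [P2]
  have t3 : ∑ x : Fin n, ∑ a : Fin n, ∑ b : Fin n, T x a b x * B a b
      = ∑ a, ∑ b, T2 a b * B a b := by
    rw [sum3_comm]
    exact key _ fun a b x => by rw [P3]
  have t4 : ∑ x : Fin n, ∑ r : Fin n, ∑ b : Fin n, T x r r b * B x b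
      = ∑ a, ∑ b, T2 a b * B a b := by
    rw [show (∑ x : Fin n, ∑ r : Fin n, ∑ b : Fin n, T x r r b * B x b)
        = ∑ x : Fin n, ∑ b : Fin n, ∑ r : Fin n, T x r r b * B x b from
      Finset.sum_congr rfl fun x _ => Finset.sum_comm]
    exact key _ fun a b x => by rw [P4]
  have t5 : ∑ x : Fin n, ∑ r : Fin n, ∑ b : Fin n, T x r b r * B x b
      = ∑ a, ∑ b, T2 a b * B a b := by
    rw [show (∑ x : Fin n, ∑ r : Fin n, ∑ b : Fin n, T x r b r * B x b)
        = ∑ x : Fin n, ∑ b : Fin n, ∑ r : Fin n, T x r b r * B x b from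
      Finset.sum_congr rfl fun x _ => Finset.sum_comm]
    exact key _ fun a b x => by rw [P5]
  have t6 : ∑ x : Fin n, ∑ a : Fin n, ∑ b : Fin n, T x a b b * B x a
      = ∑ a, ∑ b, T2 a b * B a b := key _ fun a b x => rfl
  rw [t1, t2, t3, t4, t5, t6]
  ring
open Finset

lemma auxExpand {n : ℕ} (T U : Fin n → Fin n → Fin n → Fin n → ℝ) (c : ℝ) :
    ∑ i, ∑ j, ∑ k, ∑ l, (T i j k l - c * U i j k l) ^ 2
      = ∑ i, ∑ j, ∑ k, ∑ l, (T i j k l) ^ 2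
        - 2 * c * ∑ i, ∑ j, ∑ k, ∑ l, T i j k l * U i j k l
        + c ^ 2 * ∑ i, ∑ j, ∑ k, ∑ l, (U i j k l) ^ 2 := by
  have e : ∀ i j k l : Fin n, (T i j k l - c * U i j k l) ^ 2
      = (T i j k l) ^ 2 - 2 * c * (T i j k l * U i j k l) + c ^ 2 * (U i j k l) ^ 2 := by
    intros; ring
  simp only [e, Finset.sum_add_distrib, Finset.sum_sub_distrib, ← Finset.mul_sum]
open Finset

lemma cP {n : ℕ} (T2 : Fin n → Fin n → ℝ) (Ts s : ℝ) (hdiag : ∑ a, T2 a a = Ts) :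
    (∑ a, ∑ b, T2 a b * (T2 a b - s * (if a = b then (1:ℝ) else 0)))
      = (∑ a, ∑ b, T2 a b * T2 a b) - s * Ts := by
  simp only [mul_sub, Finset.sum_sub_distrib, mul_ite, mul_one, mul_zero,
    Finset.sum_ite_eq, Finset.sum_ite_eq', Finset.mem_univ, if_true]
  rw [show (∑ x : Fin n, T2 x x * s) = (∑ a, T2 a a) * s from (Finset.sum_mul _ _ _).symm,
    hdiag]
  ring

lemma cQB {n : ℕ} (T2 : Fin n → Fin n → ℝ) (Ts s : ℝ) (hdiag : ∑ a, T2 a a = Ts) :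
    (∑ a, ∑ b, (T2 a b - s * (if a = b then (1:ℝ) else 0))
        * (T2 a b - s * (if a = b then (1:ℝ) else 0)))
      = (∑ a, ∑ b, T2 a b * T2 a b) - 2 * s * Ts + (n : ℝ) * s ^ 2 := by
  have e : ∀ a b : Fin n, (T2 a b - s * (if a = b then (1:ℝ) else 0))
        * (T2 a b - s * (if a = b then (1:ℝ) else 0))
      = T2 a b * T2 a b - 2 * (T2 a b * s) * (if a = b then (1:ℝ) else 0)
        + s ^ 2 * ((if a = b then (1:ℝ) else 0) * (if a = b then (1:ℝ) else 0)) := by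
    intro a b; by_cases h : a = b <;> simp [h] <;> ring
  simp only [e]
  simp only [ite_mul, one_mul, zero_mul, mul_ite, mul_one, mul_zero,
    Finset.sum_add_distrib, Finset.sum_sub_distrib, Finset.sum_ite_eq, Finset.sum_ite_eq',
    Finset.mem_univ, if_true, Finset.sum_const, Finset.card_univ, Fintype.card_fin,
    nsmul_eq_mul, ← Finset.mul_sum]
  rw [show (∑ i : Fin n, T2 i i * s) = (∑ a, T2 a a) * s from (Finset.sum_mul _ _ _).symm,
    hdiag]
  ring

lemma ctr {n : ℕ} (T2 : Fin n → Fin n → ℝ) (Ts s : ℝ) (hdiag : ∑ a, T2 a a = Ts) :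
    (∑ a, (T2 a a - s * (if a = a then (1:ℝ) else 0))) = Ts - (n : ℝ) * s := by
  simp only [if_true, mul_one, Finset.sum_sub_distrib, hdiag, Finset.sum_const,
    Finset.card_univ, Fintype.card_fin, nsmul_eq_mul]

open Finset in
lemma master {n : ℕ} (T : Fin n → Fin n → Fin n → Fin n → ℝ)
    (hsym12 : ∀ i j k l, T i j k l = T j i k l)
    (hsym23 : ∀ i j k l, T i j k l = T i k j l)
    (hsym34 : ∀ i j k l, T i j k l = T i j l k)
    (T2 : Fin n → Fin n → ℝ) (hT2 : ∀ i j, T2 i j = ∑ l, T i j l l)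
    (B : Fin n → Fin n → ℝ) (hB : ∀ i j, B i j = B j i) (c : ℝ) :
    0 ≤ ∑ i, ∑ j, ∑ k, ∑ l, (T i j k l) ^ 2
        - 2 * c * (6 * ∑ a, ∑ b, T2 a b * B a b)
        + c ^ 2 * (6 * ((n:ℝ) + 4) * (∑ a, ∑ b, B a b * B a b) + 6 * (∑ a, B a a) ^ 2) := by
  have h0 : 0 ≤ ∑ i, ∑ j, ∑ k, ∑ l, (T i j k l - c * Uu B i j k l) ^ 2 := by
    refine Finset.sum_nonneg fun i _ => Finset.sum_nonneg fun j _ =>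
      Finset.sum_nonneg fun k _ => Finset.sum_nonneg fun l _ => sq_nonneg _
  rw [auxExpand, auxS1 T hsym12 hsym23 hsym34 T2 hT2 B, auxS2 B hB] at h0
  exact h0

theorem stmt9 (n : ℕ) (hn : 3 ≤ n) (T : Fin n → Fin n → Fin n → Fin n → ℝ)
    (hsym12 : ∀ i j k l, T i j k l = T j i k l)
    (hsym23 : ∀ i j k l, T i j k l = T i k j l)
    (hsym34 : ∀ i j k l, T i j k l = T i j l k)
    (T2 : Fin n → Fin n → ℝ) (hT2 : ∀ i j, T2 i j = ∑ l, T i j l l)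
    (Ts : ℝ) (hTs : Ts = ∑ k, ∑ l, T k k l l) :
    ∑ i, ∑ j, ∑ k, ∑ l, (T i j k l) ^ 2
      ≥ (6 / ((n : ℝ) + 4)) * ∑ i, ∑ j, (T2 i j) ^ 2
        - 3 * Ts ^ 2 / (((n : ℝ) + 4) * ((n : ℝ) + 2)) := by
  set s : ℝ := Ts / (2 * ((n : ℝ) + 2)) with hs
  set c : ℝ := 1 / ((n : ℝ) + 4) with hc
  have hdiag : ∑ a, T2 a a = Ts := by
    rw [hTs]
    exact Finset.sum_congr rfl fun a _ => hT2 a a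
  have hT2sym : ∀ i j, T2 i j = T2 j i := by
    intro i j
    rw [hT2, hT2]
    exact Finset.sum_congr rfl fun l _ => hsym12 i j l l
  have hB : ∀ i j : Fin n, (T2 i j - s * (if i = j then (1:ℝ) else 0))
      = T2 j i - s * (if j = i then (1:ℝ) else 0) := by
    intro i j
    rw [hT2sym i j]
    congr 1
    simp [eq_comm]
  have h0 := master T hsym12 hsym23 hsym34 T2 hT2
    (fun a b => T2 a b - s * (if a = b then (1:ℝ) else 0)) hB c
  rw [cP T2 Ts s hdiag, cQB T2 Ts s hdiag, ctr T2 Ts s hdiag] at h0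
  have hQ2 : ∑ i, ∑ j, (T2 i j) ^ 2 = ∑ a, ∑ b, T2 a b * T2 a b :=
    Finset.sum_congr rfl fun i _ => Finset.sum_congr rfl fun j _ => sq (T2 i j) ▸ rfl
  have h4 : ((n:ℝ) + 4) ≠ 0 := by positivity
  have h2 : ((n:ℝ) + 2) ≠ 0 := by positivity
  have hEq : 2 * c * (6 * ((∑ a, ∑ b, T2 a b * T2 a b) - s * Ts))
      - c ^ 2 * (6 * ((n:ℝ) + 4) * ((∑ a, ∑ b, T2 a b * T2 a b) - 2 * s * Ts + (n:ℝ) * s ^ 2)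
        + 6 * (Ts - (n:ℝ) * s) ^ 2)
      = (6 / ((n : ℝ) + 4)) * (∑ a, ∑ b, T2 a b * T2 a b)
        - 3 * Ts ^ 2 / (((n : ℝ) + 4) * ((n : ℝ) + 2)) := by
    rw [hs, hc]
    field_simp
    ring
  rw [ge_iff_le, hQ2]
  linarith [h0, hEq]
end

section
/- Let T : Fin n → Fin n → Fin n → ℝ with n ≥ 2 and let F be the function on ℝ⁹ given by F(x₁,x₂,x₃,y₁,y₂,y₃,z₁,z₂,z₃) = ∑_{i,j,k} (T i j k + x₁ T¹ᵢ δⱼₖ + x₂ T¹ⱼ δᵢₖ + x₃ T¹ₖ δᵢⱼ + y₁ T²ᵢ δⱼₖ + y₂ T²ⱼ δᵢₖ + y₃ T²ₖ δᵢⱼ + z₁ T³ᵢ δⱼₖ + z₂ T³ⱼ δᵢₖ + z₃ T³ₖ δᵢⱼ)². Then F attains its global minimum at the point x₁ = y₂ = z₃ = -(n+1)/((n-1)(n+2)) and x₂ = x₃ = y₁ = y₃ = z₁ = z₂ = 1/((n-1)(n+2)), provided the Gram matrix of (T¹, T², T³) is invertible; moreover at this point F is the unique critical point of the (convex quadratic)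 function F. -/
theorem lemA (n : ℕ) (T : Fin n → Fin n → Fin n → ℝ) (U V W : Fin n → ℝ) :
    ∑ i, ∑ j, ∑ k, (T i j k + U i * (if j = k then (1:ℝ) else 0)
        + V j * (if i = k then (1:ℝ) else 0) + W k * (if i = j then (1:ℝ) else 0)) ^ 2
    = (∑ i, ∑ j, ∑ k, (T i j k)^2)
      + 2*((∑ i, (∑ l, T i l l) * U i) + (∑ i, (∑ l, T l i l) * V i) + (∑ i, (∑ l, T l l i) * W i))
      + (n:ℝ)*((∑ i, U i^2) + (∑ i, V i^2) + (∑ i, W i^2))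
      + 2*((∑ i, U i * V i) + (∑ i, U i * W i) + (∑ i, V i * W i)) := by
  have expand : ∀ a b c d : ℝ, (a+b+c+d)^2
      = a^2+(b^2+(c^2+(d^2+(2*(a*b)+(2*(a*c)+(2*(a*d)+(2*(b*c)+(2*(b*d)+2*(c*d))))))))) := by
    intros; ring
  have colG : ∀ c : Fin n → Fin n → Fin n → ℝ,
      (∑ x : Fin n, ∑ x1 : Fin n, ∑ x2 : Fin n, (if x = x1 then c x x1 x2 else 0))
        = ∑ x : Fin n, ∑ x2 : Fin n, c x x x2 := by
    intro c
    refine Finset.sum_congr rfl fun x _ => ?_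
    rw [Finset.sum_comm]
    simp [Finset.sum_ite_eq]
  simp only [mul_ite, mul_one, mul_zero, expand]
  simp only [sq, ite_zero_mul_ite_zero, ite_zero_mul, mul_ite_zero, and_self,
    Finset.sum_add_distrib, Finset.sum_ite_eq, Finset.sum_ite_eq', Finset.mem_univ, if_true,
    ite_and, Finset.sum_const, Finset.card_univ, Fintype.card_fin, nsmul_eq_mul,
    Finset.mul_sum, Finset.sum_mul]
  simp only [colG, if_pos rfl, Finset.sum_ite_eq, Finset.sum_ite_eq', Finset.mem_univ, if_true,
    Finset.sum_const, Finset.card_univ, Fintype.card_fin, nsmul_eq_mul]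
  have cE : ∑ x : Fin n, ∑ x1 : Fin n, 2 * (T x x1 x1 * U x)
      = 2 * ∑ x, ∑ i, T x i i * U x := by
    rw [Finset.mul_sum]
    exact Finset.sum_congr rfl fun x _ => (Finset.mul_sum _ _ _).symm
  have cF : ∑ x : Fin n, ∑ x1 : Fin n, 2 * (T x x1 x * V x1)
      = 2 * ∑ x, ∑ i, T i x i * V x := by
    rw [Finset.sum_comm, Finset.mul_sum]
    exact Finset.sum_congr rfl fun x _ => (Finset.mul_sum _ _ _).symm
  have cG : ∑ x : Fin n, ∑ x2 : Fin n, 2 * (T x x x2 * W x2)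
      = 2 * ∑ x, ∑ i, T i i x * W x := by
    rw [Finset.sum_comm, Finset.mul_sum]
    exact Finset.sum_congr rfl fun x _ => (Finset.mul_sum _ _ _).symm
  have cC : ∀ u : Fin n → ℝ, ∑ x : Fin n, (n:ℝ) * (u x * u x) = (n:ℝ) * ∑ x, u x * u x :=
    fun u => (Finset.mul_sum _ _ _).symm
  have cH : ∀ u v : Fin n → ℝ, ∑ x : Fin n, 2 * (u x * v x) = 2 * ∑ x, u x * v x :=
    fun u v => (Finset.mul_sum _ _ _).symm
  rw [cE, cF, cG, cC U, cC V, cH U V, cH U W, cH V W]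
  ring

theorem rowExp {n : ℕ} (S A B C : Fin n → ℝ) (p q r : ℝ) :
    ∑ i, S i * (p * A i + q * B i + r * C i)
      = p * (∑ i, S i * A i) + q * (∑ i, S i * B i) + r * (∑ i, S i * C i) := by
  have h : ∀ i, S i * (p * A i + q * B i + r * C i)
      = p * (S i * A i) + (q * (S i * B i) + r * (S i * C i)) := fun i => by ring
  simp only [h, Finset.sum_add_distrib, ← Finset.mul_sum]
  ring

theorem bilExp {n : ℕ} (A B C : Fin n → ℝ) (p q r p' q' r' : ℝ) :
    ∑ i, (p * A i + q * B i + r * C i) * (p' * A i + q' * B i + r' * C i)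
      = p*p' * (∑ i, A i * A i) + (p*q'+q*p') * (∑ i, A i * B i) + (p*r'+r*p') * (∑ i, A i * C i)
        + q*q' * (∑ i, B i * B i) + (q*r'+r*q') * (∑ i, B i * C i) + r*r' * (∑ i, C i * C i) := by
  have h : ∀ i, (p * A i + q * B i + r * C i) * (p' * A i + q' * B i + r' * C i)
      = p*p' * (A i * A i) + ((p*q'+q*p') * (A i * B i) + ((p*r'+r*p') * (A i * C i)
        + (q*q' * (B i * B i) + ((q*r'+r*q') * (B i * C i) + r*r' * (C i * C i))))) :=
    fun i => by ring
  simp only [h, Finset.sum_add_distrib, ← Finset.mul_sum]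
  ring

theorem ptzero (c p q r : ℝ) (hc : 1 ≤ c)
    (h : (p+q+r)^2 + c*(p^2+q^2+r^2) = 0) : p = 0 ∧ q = 0 ∧ r = 0 := by
  have hp2 : p^2 = 0 := by nlinarith [sq_nonneg (p+q+r), sq_nonneg p, sq_nonneg q, sq_nonneg r]
  have hq2 : q^2 = 0 := by nlinarith [sq_nonneg (p+q+r), sq_nonneg p, sq_nonneg q, sq_nonneg r]
  have hr2 : r^2 = 0 := by nlinarith [sq_nonneg (p+q+r), sq_nonneg p, sq_nonneg q, sq_nonneg r]
  exact ⟨pow_eq_zero_iff two_ne_zero |>.mp hp2,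
    pow_eq_zero_iff two_ne_zero |>.mp hq2,
    pow_eq_zero_iff two_ne_zero |>.mp hr2⟩

set_option maxHeartbeats 1000000 in
theorem stmt15 (n : ℕ) (hn : 2 ≤ n) (T : Fin n → Fin n → Fin n → ℝ)
    (T1 T2 T3 : Fin n → ℝ)
    (hT1 : ∀ i, T1 i = ∑ l, T i l l)
    (hT2 : ∀ i, T2 i = ∑ l, T l i l)
    (hT3 : ∀ i, T3 i = ∑ l, T l l i)
    (G : Matrix (Fin 3) (Fin 3) ℝ)
    (hG : G = !![∑ i, T1 i * T1 i, ∑ i, T1 i * T2 i, ∑ i, T1 i * T3 i;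
                 ∑ i, T2 i * T1 i, ∑ i, T2 i * T2 i, ∑ i, T2 i * T3 i;
                 ∑ i, T3 i * T1 i, ∑ i, T3 i * T2 i, ∑ i, T3 i * T3 i])
    (hdet : G.det ≠ 0)
    (f : ℝ → ℝ → ℝ → ℝ → ℝ → ℝ → ℝ → ℝ → ℝ → ℝ)
    (hf : ∀ x₁ x₂ x₃ y₁ y₂ y₃ z₁ z₂ z₃,
      f x₁ x₂ x₃ y₁ y₂ y₃ z₁ z₂ z₃
        = ∑ i, ∑ j, ∑ k,
            (T i j k
              + x₁ * T1 i * (if j = k then (1:ℝ) else 0)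
              + x₂ * T1 j * (if i = k then (1:ℝ) else 0)
              + x₃ * T1 k * (if i = j then (1:ℝ) else 0)
              + y₁ * T2 i * (if j = k then (1:ℝ) else 0)
              + y₂ * T2 j * (if i = k then (1:ℝ) else 0)
              + y₃ * T2 k * (if i = j then (1:ℝ) else 0)
              + z₁ * T3 i * (if j = k then (1:ℝ) else 0)
              + z₂ * T3 j * (if i = k then (1:ℝ) else 0)
              + z₃ * T3 k * (if i = j then (1:ℝ) else 0)) ^ 2)
    (a b : ℝ)
    (ha : a = - ((n : ℝ) + 1) / (((n : ℝ) - 1) * ((n : ℝ) + 2)))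
    (hb : b = 1 / (((n : ℝ) - 1) * ((n : ℝ) + 2))) :
    (∀ x₁ x₂ x₃ y₁ y₂ y₃ z₁ z₂ z₃ : ℝ,
        f a b b b a b b b a ≤ f x₁ x₂ x₃ y₁ y₂ y₃ z₁ z₂ z₃)
    ∧ (∀ x₁ x₂ x₃ y₁ y₂ y₃ z₁ z₂ z₃ : ℝ,
        f x₁ x₂ x₃ y₁ y₂ y₃ z₁ z₂ z₃ = f a b b b a b b b a →
          x₁ = a ∧ x₂ = b ∧ x₃ = b ∧ y₁ = b ∧ y₂ = a ∧ y₃ = b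
            ∧ z₁ = b ∧ z₂ = b ∧ z₃ = a) := by
  have hn2 : (2:ℝ) ≤ (n:ℝ) := by exact_mod_cast hn
  have hne1 : ((n:ℝ) - 1) ≠ 0 := by linarith
  have hne2 : ((n:ℝ) + 2) ≠ 0 := by linarith
  have hn1 : (1:ℝ) ≤ (n:ℝ) - 1 := by linarith
  have hF : ∀ x₁ x₂ x₃ y₁ y₂ y₃ z₁ z₂ z₃ : ℝ,
      f x₁ x₂ x₃ y₁ y₂ y₃ z₁ z₂ z₃
      = (∑ i, ∑ j, ∑ k, (T i j k)^2)
        + 2*((∑ i, T1 i * (x₁ * T1 i + y₁ * T2 i + z₁ * T3 i))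
            + (∑ i, T2 i * (x₂ * T1 i + y₂ * T2 i + z₂ * T3 i))
            + (∑ i, T3 i * (x₃ * T1 i + y₃ * T2 i + z₃ * T3 i)))
        + (n:ℝ)*((∑ i, (x₁ * T1 i + y₁ * T2 i + z₁ * T3 i)^2)
            + (∑ i, (x₂ * T1 i + y₂ * T2 i + z₂ * T3 i)^2)
            + (∑ i, (x₃ * T1 i + y₃ * T2 i + z₃ * T3 i)^2))
        + 2*((∑ i, (x₁ * T1 i + y₁ * T2 i + z₁ * T3 i) * (x₂ * T1 i + y₂ * T2 i + z₂ * T3 i))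
            + (∑ i, (x₁ * T1 i + y₁ * T2 i + z₁ * T3 i) * (x₃ * T1 i + y₃ * T2 i + z₃ * T3 i))
            + (∑ i, (x₂ * T1 i + y₂ * T2 i + z₂ * T3 i) * (x₃ * T1 i + y₃ * T2 i + z₃ * T3 i))) := by
    intro x₁ x₂ x₃ y₁ y₂ y₃ z₁ z₂ z₃
    rw [hf]
    have e : ∀ i j k : Fin n,
        (T i j k
          + x₁ * T1 i * (if j = k then (1:ℝ) else 0)
          + x₂ * T1 j * (if i = k then (1:ℝ) else 0)
          + x₃ * T1 k * (if i = j then (1:ℝ) else 0)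
          + y₁ * T2 i * (if j = k then (1:ℝ) else 0)
          + y₂ * T2 j * (if i = k then (1:ℝ) else 0)
          + y₃ * T2 k * (if i = j then (1:ℝ) else 0)
          + z₁ * T3 i * (if j = k then (1:ℝ) else 0)
          + z₂ * T3 j * (if i = k then (1:ℝ) else 0)
          + z₃ * T3 k * (if i = j then (1:ℝ) else 0))
        = T i j k + (x₁ * T1 i + y₁ * T2 i + z₁ * T3 i) * (if j = k then (1:ℝ) else 0)
            + (x₂ * T1 j + y₂ * T2 j + z₂ * T3 j) * (if i = k then (1:ℝ) else 0)
            + (x₃ * T1 k + y₃ * T2 k + z₃ * T3 k) * (if i = j then (1:ℝ) else 0) :=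
      fun i j k => by ring
    simp only [e]
    rw [lemA n T (fun i => x₁ * T1 i + y₁ * T2 i + z₁ * T3 i)
        (fun j => x₂ * T1 j + y₂ * T2 j + z₂ * T3 j)
        (fun k => x₃ * T1 k + y₃ * T2 k + z₃ * T3 k)]
    simp only [← hT1, ← hT2, ← hT3]
  have comm12 : ∑ i, T2 i * T1 i = ∑ i, T1 i * T2 i :=
    Finset.sum_congr rfl fun i _ => mul_comm _ _
  have comm13 : ∑ i, T3 i * T1 i = ∑ i, T1 i * T3 i :=
    Finset.sum_congr rfl fun i _ => mul_comm _ _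
  have comm23 : ∑ i, T3 i * T2 i = ∑ i, T2 i * T3 i :=
    Finset.sum_congr rfl fun i _ => mul_comm _ _
  have hQexp : ∀ d1 d2 d3 e1 e2 e3 g1 g2 g3 : ℝ,
      ∑ i, (((d1 * T1 i + d2 * T2 i + d3 * T3 i) + (e1 * T1 i + e2 * T2 i + e3 * T3 i)
              + (g1 * T1 i + g2 * T2 i + g3 * T3 i))^2
            + ((n:ℝ)-1) * ((d1 * T1 i + d2 * T2 i + d3 * T3 i)^2
              + (e1 * T1 i + e2 * T2 i + e3 * T3 i)^2
              + (g1 * T1 i + g2 * T2 i + g3 * T3 i)^2))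
      = ((d1+e1+g1)*(d1+e1+g1) * (∑ i, T1 i * T1 i)
          + ((d1+e1+g1)*(d2+e2+g2)+(d2+e2+g2)*(d1+e1+g1)) * (∑ i, T1 i * T2 i)
          + ((d1+e1+g1)*(d3+e3+g3)+(d3+e3+g3)*(d1+e1+g1)) * (∑ i, T1 i * T3 i)
          + (d2+e2+g2)*(d2+e2+g2) * (∑ i, T2 i * T2 i)
          + ((d2+e2+g2)*(d3+e3+g3)+(d3+e3+g3)*(d2+e2+g2)) * (∑ i, T2 i * T3 i)
          + (d3+e3+g3)*(d3+e3+g3) * (∑ i, T3 i * T3 i))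
        + ((n:ℝ)-1) *
          ((d1*d1 * (∑ i, T1 i * T1 i) + (d1*d2+d2*d1) * (∑ i, T1 i * T2 i)
            + (d1*d3+d3*d1) * (∑ i, T1 i * T3 i) + d2*d2 * (∑ i, T2 i * T2 i)
            + (d2*d3+d3*d2) * (∑ i, T2 i * T3 i) + d3*d3 * (∑ i, T3 i * T3 i))
          + (e1*e1 * (∑ i, T1 i * T1 i) + (e1*e2+e2*e1) * (∑ i, T1 i * T2 i)
            + (e1*e3+e3*e1) * (∑ i, T1 i * T3 i) + e2*e2 * (∑ i, T2 i * T2 i)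
            + (e2*e3+e3*e2) * (∑ i, T2 i * T3 i) + e3*e3 * (∑ i, T3 i * T3 i))
          + (g1*g1 * (∑ i, T1 i * T1 i) + (g1*g2+g2*g1) * (∑ i, T1 i * T2 i)
            + (g1*g3+g3*g1) * (∑ i, T1 i * T3 i) + g2*g2 * (∑ i, T2 i * T2 i)
            + (g2*g3+g3*g2) * (∑ i, T2 i * T3 i) + g3*g3 * (∑ i, T3 i * T3 i))) := by
    intro d1 d2 d3 e1 e2 e3 g1 g2 g3
    have h : ∀ i : Fin n,
        (((d1 * T1 i + d2 * T2 i + d3 * T3 i) + (e1 * T1 i + e2 * T2 i + e3 * T3 i)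
            + (g1 * T1 i + g2 * T2 i + g3 * T3 i))^2
          + ((n:ℝ)-1) * ((d1 * T1 i + d2 * T2 i + d3 * T3 i)^2
            + (e1 * T1 i + e2 * T2 i + e3 * T3 i)^2
            + (g1 * T1 i + g2 * T2 i + g3 * T3 i)^2))
        = ((d1+e1+g1) * T1 i + (d2+e2+g2) * T2 i + (d3+e3+g3) * T3 i)
            * ((d1+e1+g1) * T1 i + (d2+e2+g2) * T2 i + (d3+e3+g3) * T3 i)
          + (((n:ℝ)-1) * ((d1 * T1 i + d2 * T2 i + d3 * T3 i) * (d1 * T1 i + d2 * T2 i + d3 * T3 i))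
            + (((n:ℝ)-1) * ((e1 * T1 i + e2 * T2 i + e3 * T3 i) * (e1 * T1 i + e2 * T2 i + e3 * T3 i))
              + ((n:ℝ)-1) * ((g1 * T1 i + g2 * T2 i + g3 * T3 i) * (g1 * T1 i + g2 * T2 i + g3 * T3 i)))) :=
      fun i => by ring
    simp only [h, Finset.sum_add_distrib, ← Finset.mul_sum]
    rw [bilExp, bilExp, bilExp, bilExp]
    ring
  have MAIN : ∀ x₁ x₂ x₃ y₁ y₂ y₃ z₁ z₂ z₃ : ℝ,
      f x₁ x₂ x₃ y₁ y₂ y₃ z₁ z₂ z₃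
      = f a b b b a b b b a
        + ∑ i, ((((x₁-a) * T1 i + (y₁-b) * T2 i + (z₁-b) * T3 i)
                + ((x₂-b) * T1 i + (y₂-a) * T2 i + (z₂-b) * T3 i)
                + ((x₃-b) * T1 i + (y₃-b) * T2 i + (z₃-a) * T3 i))^2
              + ((n:ℝ)-1) * (((x₁-a) * T1 i + (y₁-b) * T2 i + (z₁-b) * T3 i)^2
                + ((x₂-b) * T1 i + (y₂-a) * T2 i + (z₂-b) * T3 i)^2
                + ((x₃-b) * T1 i + (y₃-b) * T2 i + (z₃-a) * T3 i)^2)) := by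
    intro x₁ x₂ x₃ y₁ y₂ y₃ z₁ z₂ z₃
    rw [hF x₁ x₂ x₃ y₁ y₂ y₃ z₁ z₂ z₃, hF a b b b a b b b a, hQexp]
    simp only [pow_two]
    rw [rowExp T1 T1 T2 T3 x₁ y₁ z₁, rowExp T2 T1 T2 T3 x₂ y₂ z₂, rowExp T3 T1 T2 T3 x₃ y₃ z₃,
      rowExp T1 T1 T2 T3 a b b, rowExp T2 T1 T2 T3 b a b, rowExp T3 T1 T2 T3 b b a,
      bilExp T1 T2 T3 x₁ y₁ z₁ x₁ y₁ z₁, bilExp T1 T2 T3 x₂ y₂ z₂ x₂ y₂ z₂,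
      bilExp T1 T2 T3 x₃ y₃ z₃ x₃ y₃ z₃,
      bilExp T1 T2 T3 x₁ y₁ z₁ x₂ y₂ z₂, bilExp T1 T2 T3 x₁ y₁ z₁ x₃ y₃ z₃,
      bilExp T1 T2 T3 x₂ y₂ z₂ x₃ y₃ z₃,
      bilExp T1 T2 T3 a b b a b b, bilExp T1 T2 T3 b a b b a b, bilExp T1 T2 T3 b b a b b a,
      bilExp T1 T2 T3 a b b b a b, bilExp T1 T2 T3 a b b b b a, bilExp T1 T2 T3 b a b b b a,
      comm12, comm13, comm23]
    subst ha hb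
    field_simp
    ring
  have tnn : ∀ p q r : ℝ, 0 ≤ (p+q+r)^2 + ((n:ℝ)-1)*(p^2+q^2+r^2) := by
    intro p q r
    have : (0:ℝ) ≤ ((n:ℝ)-1)*(p^2+q^2+r^2) := by positivity
    nlinarith [sq_nonneg (p+q+r)]
  constructor
  · intro x₁ x₂ x₃ y₁ y₂ y₃ z₁ z₂ z₃
    rw [MAIN x₁ x₂ x₃ y₁ y₂ y₃ z₁ z₂ z₃]
    have h0 : 0 ≤ ∑ i, ((((x₁-a) * T1 i + (y₁-b) * T2 i + (z₁-b) * T3 i)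
                + ((x₂-b) * T1 i + (y₂-a) * T2 i + (z₂-b) * T3 i)
                + ((x₃-b) * T1 i + (y₃-b) * T2 i + (z₃-a) * T3 i))^2
              + ((n:ℝ)-1) * (((x₁-a) * T1 i + (y₁-b) * T2 i + (z₁-b) * T3 i)^2
                + ((x₂-b) * T1 i + (y₂-a) * T2 i + (z₂-b) * T3 i)^2
                + ((x₃-b) * T1 i + (y₃-b) * T2 i + (z₃-a) * T3 i)^2)) :=
      Finset.sum_nonneg fun i _ => tnn _ _ _
    linarith
  · intro x₁ x₂ x₃ y₁ y₂ y₃ z₁ z₂ z₃ heqq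
    have hs0 : ∑ i, ((((x₁-a) * T1 i + (y₁-b) * T2 i + (z₁-b) * T3 i)
                + ((x₂-b) * T1 i + (y₂-a) * T2 i + (z₂-b) * T3 i)
                + ((x₃-b) * T1 i + (y₃-b) * T2 i + (z₃-a) * T3 i))^2
              + ((n:ℝ)-1) * (((x₁-a) * T1 i + (y₁-b) * T2 i + (z₁-b) * T3 i)^2
                + ((x₂-b) * T1 i + (y₂-a) * T2 i + (z₂-b) * T3 i)^2
                + ((x₃-b) * T1 i + (y₃-b) * T2 i + (z₃-a) * T3 i)^2)) = 0 := by
      have hm := MAIN x₁ x₂ x₃ y₁ y₂ y₃ z₁ z₂ z₃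
      rw [heqq] at hm
      linarith
    have hterm := (Finset.sum_eq_zero_iff_of_nonneg (fun i _ => tnn
      ((x₁-a) * T1 i + (y₁-b) * T2 i + (z₁-b) * T3 i)
      ((x₂-b) * T1 i + (y₂-a) * T2 i + (z₂-b) * T3 i)
      ((x₃-b) * T1 i + (y₃-b) * T2 i + (z₃-a) * T3 i))).mp hs0
    have hzero : ∀ i : Fin n,
        ((x₁-a) * T1 i + (y₁-b) * T2 i + (z₁-b) * T3 i) = 0
        ∧ ((x₂-b) * T1 i + (y₂-a) * T2 i + (z₂-b) * T3 i) = 0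
        ∧ ((x₃-b) * T1 i + (y₃-b) * T2 i + (z₃-a) * T3 i) = 0 := by
      intro i
      exact ptzero ((n:ℝ)-1) _ _ _ hn1 (hterm i (Finset.mem_univ i))
    have col : ∀ u v w : ℝ, (∀ i : Fin n, u * T1 i + v * T2 i + w * T3 i = 0) →
        u = 0 ∧ v = 0 ∧ w = 0 := by
      intro u v w hcol
      have e1 : u * (∑ i, T1 i * T1 i) + v * (∑ i, T1 i * T2 i) + w * (∑ i, T1 i * T3 i) = 0 := by
        rw [← rowExp T1 T1 T2 T3 u v w]
        exact Finset.sum_eq_zero fun i _ => by rw [hcol i, mul_zero]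
      have e2 : u * (∑ i, T2 i * T1 i) + v * (∑ i, T2 i * T2 i) + w * (∑ i, T2 i * T3 i) = 0 := by
        rw [← rowExp T2 T1 T2 T3 u v w]
        exact Finset.sum_eq_zero fun i _ => by rw [hcol i, mul_zero]
      have e3 : u * (∑ i, T3 i * T1 i) + v * (∑ i, T3 i * T2 i) + w * (∑ i, T3 i * T3 i) = 0 := by
        rw [← rowExp T3 T1 T2 T3 u v w]
        exact Finset.sum_eq_zero fun i _ => by rw [hcol i, mul_zero]
      have hu : G.mulVec ![u, v, w] = 0 := by
        funext m
        fin_cases m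
        · simp [hG, Matrix.mulVec, dotProduct, Fin.sum_univ_three]
          linear_combination e1
        · simp [hG, Matrix.mulVec, dotProduct, Fin.sum_univ_three]
          linear_combination e2
        · simp [hG, Matrix.mulVec, dotProduct, Fin.sum_univ_three]
          linear_combination e3
      have hz := Matrix.eq_zero_of_mulVec_eq_zero hdet hu
      refine ⟨?_, ?_, ?_⟩
      · have := congrFun hz 0; simpa using this
      · have := congrFun hz 1; simpa using this
      · have := congrFun hz 2; simpa using this
    obtain ⟨h1, h2, h3⟩ := col (x₁-a) (y₁-b) (z₁-b) (fun i => (hzero i).1)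
    obtain ⟨h4, h5, h6⟩ := col (x₂-b) (y₂-a) (z₂-b) (fun i => (hzero i).2.1)
    obtain ⟨h7, h8, h9⟩ := col (x₃-b) (y₃-b) (z₃-a) (fun i => (hzero i).2.2)
    exact ⟨sub_eq_zero.mp h1, sub_eq_zero.mp h4, sub_eq_zero.mp h7,
      sub_eq_zero.mp h2, sub_eq_zero.mp h5, sub_eq_zero.mp h8,
      sub_eq_zero.mp h3, sub_eq_zero.mp h6, sub_eq_zero.mp h9⟩
end
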